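/- arXiv:1905.05048 — 13 statements merged into one kernel-verified Lean document; each statement's English description precedes it below -/
import Mathlib

section
/- Let M = (α, β; γ, δ) ∈ SL₂(ℤ) satisfy α ≡ δ (mod p) and γ ≡ εβ (mod p), let [A,B,C] ∈ Q_ns, and write [A',B',C'] = [A,B,C]·M. Then A' ≡ A (mod p), B' ≡ B (mod 2p) and C' ≡ C (mod p); in particular [A',B',C'] ∈ Q_ns. -/
/-- Lemma 5.1 (1)-(3) of the paper. If `M = (α, β; γ, δ) ∈ SL₂(ℤ)`
lies in `Γ_ns` (i.e. `α ≡ δ` and `γ ≡ εβ (mod p)`) and `[A,B,C] ∈ Q_ns`, then the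
transformed form `[A',B',C'] = [A,B,C]·M` satisfies `A' ≡ A (mod p)`,
`B' ≡ B (mod 2p)`, `C' ≡ C (mod p)`; in particular `[A',B',C'] ∈ Q_ns`. -/
theorem stmt_0 (p : ℕ) (hp : p.Prime) (hp2 : p ≠ 2)
    (ε : ℤ) (hε1 : ε ≡ 1 [ZMOD 4]) (hεns : ¬ IsSquare (ε : ZMod p))
    (α β γ δ : ℤ) (hdet : α * δ - β * γ = 1)
    (hαδ : α ≡ δ [ZMOD (p : ℤ)]) (hγβ : γ ≡ ε * β [ZMOD (p : ℤ)])
    (A B C : ℤ)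
    (hB : B ≡ 0 [ZMOD (p : ℤ)]) (hAC : A + C * ε ≡ 0 [ZMOD (p : ℤ)])
    (A' B' C' : ℤ)
    (hA' : A' = A * α ^ 2 + B * α * γ + C * γ ^ 2)
    (hB' : B' = 2 * A * α * β + B * (α * δ + β * γ) + 2 * C * γ * δ)
    (hC' : C' = A * β ^ 2 + B * β * δ + C * δ ^ 2) :
    A' ≡ A [ZMOD (p : ℤ)] ∧ B' ≡ B [ZMOD (2 * (p : ℤ))] ∧ C' ≡ C [ZMOD (p : ℤ)] ∧
      B' ≡ 0 [ZMOD (p : ℤ)] ∧ A' + C' * ε ≡ 0 [ZMOD (p : ℤ)] := by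
  have key : ∀ x y : ℤ, x ≡ y [ZMOD (p : ℤ)] ↔ ((x : ZMod p) = y) := by
    intro x y
    exact (ZMod.intCast_eq_intCast_iff' x y p).symm
  -- cast hypotheses to ZMod p
  have H1 : ((α : ZMod p) = δ) := (key _ _).mp hαδ
  have H2 : ((γ : ZMod p) = (ε : ZMod p) * β) := by
    have := (key _ _).mp hγβ; push_cast at this; exact this
  have H3 : ((B : ZMod p) = 0) := by
    have := (key _ _).mp hB; push_cast at this; exact this
  have H4 : ((A : ZMod p) + (C : ZMod p) * ε = 0) := by
    have := (key _ _).mp hAC; push_cast at this; exact this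
  have Hdet : ((α : ZMod p) * δ - β * γ = 1) := by
    have := congrArg (Int.cast : ℤ → ZMod p) hdet; push_cast at this; exact this
  have hA2 : A' ≡ A [ZMOD (p : ℤ)] := by
    rw [key]
    push_cast [hA']
    linear_combination ((α : ZMod p) * γ) * H3 + (C : ZMod p) * (γ + (ε : ZMod p) * β) * H2
      + (A : ZMod p) * α * H1 + (A : ZMod p) * Hdet + (A : ZMod p) * β * H2
      + (ε : ZMod p) * β ^ 2 * H4
  have hC2 : C' ≡ C [ZMOD (p : ℤ)] := by
    rw [key]
    push_cast [hC']
    linear_combination ((β : ZMod p) * δ) * H3 + (C : ZMod p) * α * H1 + (C : ZMod p) * Hdet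
      + (C : ZMod p) * β * H2 + (β : ZMod p) ^ 2 * H4
      - (C : ZMod p) * ((α : ZMod p) + δ) * H1
  -- the middle quantity
  set E : ℤ := A * α * β + B * β * γ + C * γ * δ with hE
  have hEp : (p : ℤ) ∣ E := by
    rw [← Int.modEq_zero_iff_dvd, key]
    push_cast [hE]
    linear_combination ((β : ZMod p) * γ) * H3 - (C : ZMod p) * γ * H1
      + (C : ZMod p) * α * H2 + (α : ZMod p) * β * H4
  have hBkey : B' = B + 2 * E := by rw [hE]; linear_combination hB' + B * hdet
  have hB2 : B' ≡ B [ZMOD (2 * (p : ℤ))] := by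
    rw [Int.modEq_iff_dvd]
    obtain ⟨k, hk⟩ := hEp
    exact ⟨-k, by rw [hBkey, hk]; ring⟩
  refine ⟨hA2, hB2, hC2, ?_, ?_⟩
  · exact (hB2.of_mul_left 2).trans hB
  · exact (hA2.add (hC2.mul_right ε)).trans hAC
end

section
/- Let M = (α, β; γ, δ) ∈ SL₂(ℤ) satisfy α ≡ δ (mod p) and γ ≡ εβ (mod p), let [A,B,C] ∈ Q_ns, and write [A',B',C'] = [A,B,C]·M. Then A − A' ≡ ε(C − C') (mod p²). -/
/-- Lemma 5.1 (4) of the paper. If `M = (α, β; γ, δ) ∈ SL₂(ℤ)` lies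
in `Γ_ns` and `[A,B,C] ∈ Q_ns`, then `[A',B',C'] = [A,B,C]·M` satisfies
`A − A' ≡ ε(C − C') (mod p²)`. -/
theorem stmt_1 (p : ℕ) (hp : p.Prime) (hp2 : p ≠ 2)
    (ε : ℤ) (hε1 : ε ≡ 1 [ZMOD 4]) (hεns : ¬ IsSquare (ε : ZMod p))
    (α β γ δ : ℤ) (hdet : α * δ - β * γ = 1)
    (hαδ : α ≡ δ [ZMOD (p : ℤ)]) (hγβ : γ ≡ ε * β [ZMOD (p : ℤ)])
    (A B C : ℤ)
    (hB : B ≡ 0 [ZMOD (p : ℤ)]) (hAC : A + C * ε ≡ 0 [ZMOD (p : ℤ)])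
    (A' B' C' : ℤ)
    (hA' : A' = A * α ^ 2 + B * α * γ + C * γ ^ 2)
    (hB' : B' = 2 * A * α * β + B * (α * δ + β * γ) + 2 * C * γ * δ)
    (hC' : C' = A * β ^ 2 + B * β * δ + C * δ ^ 2) :
    A - A' ≡ ε * (C - C') [ZMOD ((p : ℤ) ^ 2)] := by
  obtain ⟨d, hd⟩ := Int.ModEq.dvd hαδ
  obtain ⟨g, hg⟩ := Int.ModEq.dvd hγβ
  obtain ⟨b, hb⟩ := Int.ModEq.dvd hB
  obtain ⟨a, ha⟩ := Int.ModEq.dvd hAC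
  rw [Int.modEq_iff_dvd]
  subst hA' hC'
  have hδ : δ = α + (p : ℤ) * d := by linarith
  have hγ : γ = ε * β - (p : ℤ) * g := by linarith
  have hBe : B = -((p : ℤ) * b) := by linarith
  have hAe : A = -(C * ε) - (p : ℤ) * a := by linarith
  subst hδ hγ hBe hAe
  exact ⟨a * (α * d + β * g) - ε * C * d ^ 2 + C * g ^ 2 + b * (α * g + ε * β * d),
    by linear_combination (-(2 * ε * C + (p : ℤ) * a)) * hdet⟩
end

section
/- Let M = (α, β; γ, δ) ∈ SL₂(ℤ) satisfy α ≡ −δ (mod p) and γ ≡ −εβ (mod p), let [A,B,C] ∈ Q_ns, and write [A',B',C'] = [A,B,C]·M. Then A' ≡ −A (mod p), B' ≡ −B (mod 2p) and C' ≡ −C (mod p); in particular [A',B',C'] ∈ Q_ns. -/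
/-- Lemma 5.4 (1)-(3) of the paper. If `M = (α, β; γ, δ) ∈ SL₂(ℤ)`
lies in `Γ⁺_ns \ Γ_ns` (i.e. `α ≡ −δ` and `γ ≡ −εβ (mod p)`) and `[A,B,C] ∈ Q_ns`,
then `[A',B',C'] = [A,B,C]·M` satisfies `A' ≡ −A (mod p)`, `B' ≡ −B (mod 2p)`,
`C' ≡ −C (mod p)`; in particular `[A',B',C'] ∈ Q_ns`. -/
theorem stmt_2 (p : ℕ) (hp : p.Prime) (hp2 : p ≠ 2)
    (ε : ℤ) (hε1 : ε ≡ 1 [ZMOD 4]) (hεns : ¬ IsSquare (ε : ZMod p))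
    (α β γ δ : ℤ) (hdet : α * δ - β * γ = 1)
    (hαδ : α ≡ -δ [ZMOD (p : ℤ)]) (hγβ : γ ≡ -(ε * β) [ZMOD (p : ℤ)])
    (A B C : ℤ)
    (hB : B ≡ 0 [ZMOD (p : ℤ)]) (hAC : A + C * ε ≡ 0 [ZMOD (p : ℤ)])
    (A' B' C' : ℤ)
    (hA' : A' = A * α ^ 2 + B * α * γ + C * γ ^ 2)
    (hB' : B' = 2 * A * α * β + B * (α * δ + β * γ) + 2 * C * γ * δ)
    (hC' : C' = A * β ^ 2 + B * β * δ + C * δ ^ 2) :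
    A' ≡ -A [ZMOD (p : ℤ)] ∧ B' ≡ -B [ZMOD (2 * (p : ℤ))] ∧ C' ≡ -C [ZMOD (p : ℤ)] ∧
      B' ≡ 0 [ZMOD (p : ℤ)] ∧ A' + C' * ε ≡ 0 [ZMOD (p : ℤ)] := by
  -- Translate hypotheses to equalities in `ZMod p`.
  have hαδ' := (ZMod.intCast_eq_intCast_iff _ _ p).2 hαδ
  have hγβ' := (ZMod.intCast_eq_intCast_iff _ _ p).2 hγβ
  have hB0 := (ZMod.intCast_eq_intCast_iff _ _ p).2 hB
  have hAC' := (ZMod.intCast_eq_intCast_iff _ _ p).2 hAC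
  push_cast at hαδ' hγβ' hB0 hAC'
  have hdet' : ((α : ZMod p)) * δ - β * γ = 1 := by exact_mod_cast congrArg (Int.cast : ℤ → ZMod p) hdet
  have eδ : ((δ : ZMod p)) = -(α : ZMod p) := by linear_combination hαδ'
  have eA : ((A : ZMod p)) = -((C : ZMod p) * ε) := by linear_combination hAC'
  rw [eδ, hγβ'] at hdet'
  -- A' ≡ -A (mod p)
  have h1 : A' ≡ -A [ZMOD (p : ℤ)] := by
    rw [← ZMod.intCast_eq_intCast_iff, hA']
    push_cast
    rw [eA, hB0, hγβ']
    linear_combination ((C : ZMod p) * ε) * hdet'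
  -- C' ≡ -C (mod p)
  have h3 : C' ≡ -C [ZMOD (p : ℤ)] := by
    rw [← ZMod.intCast_eq_intCast_iff, hC']
    push_cast
    rw [eA, hB0, eδ]
    linear_combination (-(C : ZMod p)) * hdet'
  -- B' ≡ -B (mod 2p)
  have hid : B' + B = 2 * (A * α * β + B * α * δ + C * γ * δ) := by
    rw [hB']; linear_combination (-B) * hdet
  have hS : (A * α * β + B * α * δ + C * γ * δ) ≡ 0 [ZMOD (p : ℤ)] := by
    rw [← ZMod.intCast_eq_intCast_iff]
    push_cast
    rw [eA, hB0, hγβ', eδ]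
    ring
  obtain ⟨k, hk⟩ := Int.modEq_zero_iff_dvd.mp hS
  have h2 : B' ≡ -B [ZMOD (2 * (p : ℤ))] := by
    rw [Int.modEq_iff_dvd]
    exact ⟨-k, by linear_combination -hid - 2 * hk⟩
  -- B' ≡ 0 (mod p)
  have h4 : B' ≡ 0 [ZMOD (p : ℤ)] :=
    ((h2.of_dvd (dvd_mul_left _ 2)).trans (by simpa using hB.neg))
  -- A' + C'ε ≡ 0 (mod p)
  have h5 : A' + C' * ε ≡ 0 [ZMOD (p : ℤ)] := by
    have c1 := (ZMod.intCast_eq_intCast_iff _ _ p).2 h1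
    have c3 := (ZMod.intCast_eq_intCast_iff _ _ p).2 h3
    push_cast at c1 c3
    rw [← ZMod.intCast_eq_intCast_iff]
    push_cast
    linear_combination c1 + (ε : ZMod p) * c3 - hAC'
  exact ⟨h1, h2, h3, h4, h5⟩
end

section
/- Let D and s be integers, let M = (α, β; γ, δ) ∈ SL₂(ℤ) satisfy α ≡ δ (mod p) and γ ≡ εβ (mod p), and let [A,B,C] ∈ Q_{ns,D,s}. Then [A,B,C]·M ∈ Q_{ns,D,s}. In other words, the group of such matrices acts on the set Q_{ns,D,s}. -/
/-- The group `Γ_ns` acts on `Q_{ns,D,s}`. If `M = (α, β; γ, δ) ∈ SL₂(ℤ)`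
satisfies `α ≡ δ` and `γ ≡ εβ (mod p)`, and `[A,B,C] ∈ Q_{ns,D,s}`, then
`[A,B,C]·M ∈ Q_{ns,D,s}`. -/
theorem stmt_4 (p : ℕ) (hp : p.Prime) (hp2 : p ≠ 2)
    (ε : ℤ) (hε1 : ε ≡ 1 [ZMOD 4]) (hεns : ¬ IsSquare (ε : ZMod p))
    (D s : ℤ)
    (α β γ δ : ℤ) (hdet : α * δ - β * γ = 1)
    (hαδ : α ≡ δ [ZMOD (p : ℤ)]) (hγβ : γ ≡ ε * β [ZMOD (p : ℤ)])
    (A B C : ℤ)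
    (hB : B ≡ 0 [ZMOD (p : ℤ)]) (hAC : A + C * ε ≡ 0 [ZMOD (p : ℤ)])
    (hdisc : B ^ 2 - 4 * A * C = D)
    (hs : A - C * ε ≡ s [ZMOD ((p : ℤ) ^ 2)]) (hs2 : B ≡ s [ZMOD 2])
    (A' B' C' : ℤ)
    (hA' : A' = A * α ^ 2 + B * α * γ + C * γ ^ 2)
    (hB' : B' = 2 * A * α * β + B * (α * δ + β * γ) + 2 * C * γ * δ)
    (hC' : C' = A * β ^ 2 + B * β * δ + C * δ ^ 2) :
    B' ≡ 0 [ZMOD (p : ℤ)] ∧ A' + C' * ε ≡ 0 [ZMOD (p : ℤ)] ∧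
      B' ^ 2 - 4 * A' * C' = D ∧
      A' - C' * ε ≡ s [ZMOD ((p : ℤ) ^ 2)] ∧ B' ≡ s [ZMOD 2] := by
  subst hA' hB' hC'
  obtain ⟨u, hu⟩ := hαδ.dvd
  obtain ⟨v, hv⟩ := hγβ.symm.dvd
  obtain ⟨bb, hbb⟩ := Int.modEq_zero_iff_dvd.mp hB
  obtain ⟨k, hk⟩ := Int.modEq_zero_iff_dvd.mp hAC
  have hδ : δ = α + (p : ℤ) * u := by linarith
  have hγ : γ = ε * β + (p : ℤ) * v := by linarith
  have hA : A = (p : ℤ) * k - C * ε := by linarith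
  subst hδ hγ hA hbb
  refine ⟨?_, ?_, ?_, ?_, ?_⟩
  · rw [Int.modEq_zero_iff_dvd]
    exact ⟨2*β*ε*C*u + β^2*ε*bb + 2*α*C*v + 2*α*β*k + α^2*bb
      + (p:ℤ)*(2*C*u*v + β*bb*v + α*bb*u), by ring⟩
  · rw [Int.modEq_zero_iff_dvd]
    exact ⟨2*β*ε*C*v + β^2*ε*k + 2*α*ε*C*u + 2*α*β*ε*bb + α^2*k
      + (p:ℤ)*(C*v^2 + ε*C*u^2 + β*ε*bb*u + α*bb*v), by ring⟩
  · linear_combination hdisc + (((p:ℤ)*bb)^2 - 4*((p:ℤ)*k - C*ε)*C) *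
      ((α*(α + (p:ℤ)*u) - β*(ε*β + (p:ℤ)*v)) + 1) * hdet
  · refine Int.ModEq.trans ?_ hs
    rw [Int.modEq_iff_dvd]
    refine ⟨-(C*v^2 - ε*C*u^2 + β*k*v - β*ε*bb*u + α*bb*v - α*k*u), ?_⟩
    linear_combination (2*C*ε - (p:ℤ)*k) * hdet
  · refine Int.ModEq.trans ?_ hs2
    rw [Int.modEq_iff_dvd]
    refine ⟨-(((p:ℤ)*k - C*ε)*α*β + (p:ℤ)*bb*β*(ε*β + (p:ℤ)*v)
      + C*(ε*β + (p:ℤ)*v)*(α + (p:ℤ)*u)), ?_⟩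
    linear_combination (-((p:ℤ)*bb)) * hdet
end

section
/- Let D and s be integers, let M = (α, β; γ, δ) ∈ SL₂(ℤ) satisfy α ≡ −δ (mod p) and γ ≡ −εβ (mod p), and let [A,B,C] ∈ Q_{ns,D,s}. Then [A,B,C]·M ∈ Q_{ns,D,−s}. -/
/-- If `M = (α, β; γ, δ) ∈ SL₂(ℤ)` satisfies `α ≡ −δ` and
`γ ≡ −εβ (mod p)`, and `[A,B,C] ∈ Q_{ns,D,s}`, then `[A,B,C]·M ∈ Q_{ns,D,−s}`. -/
theorem stmt_5 (p : ℕ) (hp : p.Prime) (hp2 : p ≠ 2)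
    (ε : ℤ) (hε1 : ε ≡ 1 [ZMOD 4]) (hεns : ¬ IsSquare (ε : ZMod p))
    (D s : ℤ)
    (α β γ δ : ℤ) (hdet : α * δ - β * γ = 1)
    (hαδ : α ≡ -δ [ZMOD (p : ℤ)]) (hγβ : γ ≡ -(ε * β) [ZMOD (p : ℤ)])
    (A B C : ℤ)
    (hB : B ≡ 0 [ZMOD (p : ℤ)]) (hAC : A + C * ε ≡ 0 [ZMOD (p : ℤ)])
    (hdisc : B ^ 2 - 4 * A * C = D)
    (hs : A - C * ε ≡ s [ZMOD ((p : ℤ) ^ 2)]) (hs2 : B ≡ s [ZMOD 2])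
    (A' B' C' : ℤ)
    (hA' : A' = A * α ^ 2 + B * α * γ + C * γ ^ 2)
    (hB' : B' = 2 * A * α * β + B * (α * δ + β * γ) + 2 * C * γ * δ)
    (hC' : C' = A * β ^ 2 + B * β * δ + C * δ ^ 2) :
    B' ≡ 0 [ZMOD (p : ℤ)] ∧ A' + C' * ε ≡ 0 [ZMOD (p : ℤ)] ∧
      B' ^ 2 - 4 * A' * C' = D ∧
      A' - C' * ε ≡ -s [ZMOD ((p : ℤ) ^ 2)] ∧ B' ≡ -s [ZMOD 2] := by
  subst hA' hB' hC'
  have h3 : (2 * A * α * β + B * (α * δ + β * γ) + 2 * C * γ * δ) ^ 2 -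
      4 * (A * α ^ 2 + B * α * γ + C * γ ^ 2) * (A * β ^ 2 + B * β * δ + C * δ ^ 2) = D := by
    linear_combination (α * δ - β * γ) ^ 2 * hdisc + D * (α * δ - β * γ + 1) * hdet
  obtain ⟨a, ha⟩ := Int.ModEq.dvd hαδ
  have hα : α = -δ - (p : ℤ) * a := by linarith
  subst hα
  obtain ⟨c, hc⟩ := Int.ModEq.dvd hγβ
  have hγ : γ = -(ε * β) - (p : ℤ) * c := by linarith
  subst hγ
  obtain ⟨t, ht⟩ := Int.ModEq.dvd hAC
  have hA : A = -(C * ε) - (p : ℤ) * t := by linarith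
  subst hA
  obtain ⟨b, hb⟩ := Int.ModEq.dvd hB
  have hBe : B = -((p : ℤ) * b) := by linarith
  subst hBe
  obtain ⟨u, hu⟩ := Int.ModEq.dvd hs
  obtain ⟨v, hv⟩ := Int.ModEq.dvd hs2
  refine ⟨Int.modEq_iff_dvd.mpr ⟨-b*β^2*ε - b*δ^2 - 2*t*δ*β + 2*c*δ*C - 2*a*β*ε*C
      - (p:ℤ)*c*b*β - (p:ℤ)*a*b*δ - 2*(p:ℤ)*a*t*β, by ring⟩,
    Int.modEq_iff_dvd.mpr ⟨2*b*δ*β*ε + t*β^2*ε + t*δ^2 - 2*c*β*ε*C + 2*a*δ*ε*C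
      + (p:ℤ)*c*b*δ - (p:ℤ)*c^2*C + (p:ℤ)*a*b*β*ε + 2*(p:ℤ)*a*t*δ + (p:ℤ)*a^2*ε*C
      + (p:ℤ)^2*a*c*b + (p:ℤ)^2*a^2*t, by ring⟩,
    h3,
    Int.modEq_iff_dvd.mpr ⟨-u + c*b*δ + c*t*β - c^2*C + a*b*β*ε + a*t*δ + a^2*ε*C
      + (p:ℤ)*a*c*b + (p:ℤ)*a^2*t, by
        linear_combination (-1 : ℤ) * hu + (-2*ε*C - (p:ℤ)*t) * hdet⟩,
    Int.modEq_iff_dvd.mpr ⟨-v + (p:ℤ)*b - (p:ℤ)*b*β^2*ε - (p:ℤ)*t*δ*β + (p:ℤ)*c*δ*C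
      - (p:ℤ)*a*β*ε*C - (p:ℤ)^2*c*b*β - (p:ℤ)^2*a*t*β, by
        linear_combination (-1 : ℤ) * hv + ((p:ℤ)*b) * hdet⟩⟩
end

section
/- Let D and s be integers with D not divisible by p. Suppose [A,B,C] and [A',B',C'] both belong to Q_{ns,D,s} and that M = (α, β; γ, δ) ∈ SL₂(ℤ) satisfies [A,B,C]·M = [A',B',C']. Then α ≡ δ (mod p) and γ ≡ εβ (mod p). -/
/-- Injectivity step in Proposition 5.3 of the paper. If `p ∤ D` and
`M = (α, β; γ, δ) ∈ SL₂(ℤ)` carries a form of `Q_{ns,D,s}` to a form of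
`Q_{ns,D,s}`, then `α ≡ δ (mod p)` and `γ ≡ εβ (mod p)`, i.e. `M ∈ Γ_ns`. -/
theorem stmt_7 (p : ℕ) (hp : p.Prime) (hp2 : p ≠ 2)
    (ε : ℤ) (hε1 : ε ≡ 1 [ZMOD 4]) (hεns : ¬ IsSquare (ε : ZMod p))
    (D s : ℤ) (hpD : ¬ (p : ℤ) ∣ D)
    (A B C : ℤ)
    (hB : B ≡ 0 [ZMOD (p : ℤ)]) (hAC : A + C * ε ≡ 0 [ZMOD (p : ℤ)])
    (hdisc : B ^ 2 - 4 * A * C = D)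
    (hs : A - C * ε ≡ s [ZMOD ((p : ℤ) ^ 2)]) (hs2 : B ≡ s [ZMOD 2])
    (A' B' C' : ℤ)
    (hB'' : B' ≡ 0 [ZMOD (p : ℤ)]) (hAC' : A' + C' * ε ≡ 0 [ZMOD (p : ℤ)])
    (hdisc' : B' ^ 2 - 4 * A' * C' = D)
    (hs' : A' - C' * ε ≡ s [ZMOD ((p : ℤ) ^ 2)]) (hs2' : B' ≡ s [ZMOD 2])
    (α β γ δ : ℤ) (hdet : α * δ - β * γ = 1)
    (hA' : A' = A * α ^ 2 + B * α * γ + C * γ ^ 2)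
    (hB' : B' = 2 * A * α * β + B * (α * δ + β * γ) + 2 * C * γ * δ)
    (hC' : C' = A * β ^ 2 + B * β * δ + C * δ ^ 2) :
    α ≡ δ [ZMOD (p : ℤ)] ∧ γ ≡ ε * β [ZMOD (p : ℤ)] := by
  haveI : Fact p.Prime := ⟨hp⟩
  have hpp : ((p : ℤ)) ∣ ((p : ℤ) ^ 2) := dvd_pow_self _ two_ne_zero
  -- cast everything into ZMod p
  have cast : ∀ x y : ℤ, x ≡ y [ZMOD (p : ℤ)] → ((x : ZMod p) = (y : ZMod p)) := by
    intro x y h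
    exact (ZMod.intCast_eq_intCast_iff x y p).mpr h
  have hb : (B : ZMod p) = 0 := by simpa using cast B 0 hB
  have hb' : (B' : ZMod p) = 0 := by simpa using cast B' 0 hB''
  have hac : (A : ZMod p) + C * ε = 0 := by
    have := cast _ _ hAC; push_cast at this; simpa using this
  have hac' : (A' : ZMod p) + C' * ε = 0 := by
    have := cast _ _ hAC'; push_cast at this; simpa using this
  have hsA : (A : ZMod p) - C * ε = s := by
    have := cast _ _ (hs.of_dvd hpp); push_cast at this; simpa using this
  have hsA' : (A' : ZMod p) - C' * ε = s := by
    have := cast _ _ (hs'.of_dvd hpp); push_cast at this; simpa using this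
  have hε0 : (ε : ZMod p) ≠ 0 := fun h => hεns ⟨0, by rw [h]; ring⟩
  have h20 : (2 : ZMod p) ≠ 0 := by
    have : ((2 : ℕ) : ZMod p) ≠ 0 := by
      rw [Ne, ZMod.natCast_eq_zero_iff]
      exact fun h => hp2 ((Nat.prime_dvd_prime_iff_eq hp Nat.prime_two).mp h)
    simpa using this
  -- C = C' mod p
  have hCC' : (C : ZMod p) = C' := by
    have h1 : (2 : ZMod p) * C * ε = (2 : ZMod p) * C' * ε := by
      linear_combination hsA' - hsA + hac - hac'
    exact mul_left_cancel₀ h20 (mul_right_cancel₀ hε0 h1)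
  -- C ≠ 0 mod p
  have hD0 : (D : ZMod p) ≠ 0 := by
    rw [Ne, ZMod.intCast_zmod_eq_zero_iff_dvd]; exact hpD
  have hC0 : (C : ZMod p) ≠ 0 := by
    intro h
    apply hD0
    have := congrArg (fun x : ℤ => (x : ZMod p)) hdisc
    push_cast at this
    rw [← this, hb, h]; ring
  -- the three equations mod p
  have e1 : (ε : ZMod p) * α ^ 2 - γ ^ 2 = ε := by
    have hA := congrArg (fun x : ℤ => (x : ZMod p)) hA'
    push_cast at hA
    have hAe : -((C : ZMod p) * ε) = -(C * ε) * α ^ 2 + C * γ ^ 2 := by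
      rw [eq_neg_of_add_eq_zero_left hac, eq_neg_of_add_eq_zero_left hac', ← hCC'] at hA
      linear_combination hA + (α : ZMod p) * γ * hb
    have : (C : ZMod p) * (ε * α ^ 2 - γ ^ 2) = C * ε := by linear_combination hAe
    exact mul_left_cancel₀ hC0 this
  have e2 : (γ : ZMod p) * δ = ε * α * β := by
    have hBc := congrArg (fun x : ℤ => (x : ZMod p)) hB'
    push_cast at hBc
    rw [hb, hb', eq_neg_of_add_eq_zero_left hac] at hBc
    have h2C : (2 : ZMod p) * C ≠ 0 := mul_ne_zero h20 hC0
    have : (2 : ZMod p) * C * (γ * δ) = 2 * C * (ε * α * β) := by linear_combination -hBc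
    exact mul_left_cancel₀ h2C this
  have e3 : (δ : ZMod p) ^ 2 - ε * β ^ 2 = 1 := by
    have hCc := congrArg (fun x : ℤ => (x : ZMod p)) hC'
    push_cast at hCc
    rw [hb, eq_neg_of_add_eq_zero_left hac, ← hCC'] at hCc
    have : (C : ZMod p) * (δ ^ 2 - ε * β ^ 2) = C * 1 := by linear_combination -hCc
    exact mul_left_cancel₀ hC0 this
  have hd : (α : ZMod p) * δ - β * γ = 1 := by
    have := congrArg (fun x : ℤ => (x : ZMod p)) hdet
    push_cast at this; exact this
  have had : (α : ZMod p) = δ := by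
    linear_combination -(α : ZMod p) * e3 + (β : ZMod p) * e2 + (δ : ZMod p) * hd
  have hgb : (γ : ZMod p) = ε * β := by
    have key : (γ : ZMod p) * (ε * β - γ) = 0 := by
      linear_combination e1 - (ε : ZMod p) * hd - (ε : ZMod p) * α * had
    rcases mul_eq_zero.mp key with hg0 | h
    · -- γ = 0 case
      have hα0 : (α : ZMod p) ≠ 0 := by
        intro h0
        rw [hg0, h0] at hd
        simp at hd
      have hβ0 : (β : ZMod p) = 0 := by
        rw [hg0] at e2
        simp at e2
        rcases e2 with h | h
        · rcases h with h | h
          · exact absurd h hε0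
          · exact absurd h hα0
        · exact h
      rw [hg0, hβ0, mul_zero]
    · linear_combination -h
  constructor
  · exact (ZMod.intCast_eq_intCast_iff α δ p).mp had
  · have : ((γ : ℤ) : ZMod p) = ((ε * β : ℤ) : ZMod p) := by push_cast; exact hgb
    exact (ZMod.intCast_eq_intCast_iff _ _ p).mp this
end

section
/- Let X ∈ GL₂(𝔽_p) and let Y ∈ C_ns. Assume that X and Y have the same trace and the same determinant, and that tr(X)² − 4·det(X) ≠ 0 in 𝔽_p (i.e. the common characteristic polynomial has simple roots). Then there exists g ∈ SL₂(𝔽_p) such that g·X·g⁻¹ = Y. -/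
open Polynomial in
lemma aux_quad_surj (p : ℕ) [Fact p.Prime] (hodd : p % 2 = 1) (D c : ZMod p) (hD : D ≠ 0) :
    ∃ s v : ZMod p, s ^ 2 - D * v ^ 2 = c := by
  have hg : degree (C (-D) * X ^ 2 + C (0 : ZMod p) * X + C (-c)) = 2 :=
    Polynomial.degree_quadratic (neg_ne_zero.mpr hD)
  obtain ⟨s, v, hsv⟩ := FiniteField.exists_root_sum_quadratic
    (f := (X ^ 2 : (ZMod p)[X])) (g := C (-D) * X ^ 2 + C 0 * X + C (-c))
    (Polynomial.degree_X_pow 2) hg (by rwa [ZMod.card])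
  refine ⟨s, v, ?_⟩
  simp only [eval_add, eval_mul, eval_pow, eval_X, eval_C, zero_mul] at hsv
  linear_combination hsv

/-- If `X ∈ GL₂(𝔽_p)` and `Y ∈ C_ns` have the same trace and
determinant, and the common characteristic polynomial has simple roots
(`tr(X)² − 4·det(X) ≠ 0`), then `X` and `Y` are conjugate by an element of
`SL₂(𝔽_p)`. -/
theorem stmt_8 (p : ℕ) (hp : p.Prime) (hp2 : p ≠ 2)
    (ε : ℤ) (hε1 : ε ≡ 1 [ZMOD 4]) (hεns : ¬ IsSquare (ε : ZMod p))
    (X Y : Matrix (Fin 2) (Fin 2) (ZMod p))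
    (hX : IsUnit X.det)
    (hYform : ∃ a b : ZMod p, Y = !![a, b; b * (ε : ZMod p), a])
    (hYunit : IsUnit Y.det)
    (htr : X.trace = Y.trace) (hdet : X.det = Y.det)
    (hsimple : X.trace ^ 2 - 4 * X.det ≠ 0) :
    ∃ g : Matrix.SpecialLinearGroup (Fin 2) (ZMod p),
      (g : Matrix (Fin 2) (Fin 2) (ZMod p)) * X *
        ((g⁻¹ : Matrix.SpecialLinearGroup (Fin 2) (ZMod p)) :
          Matrix (Fin 2) (Fin 2) (ZMod p)) = Y := by
  haveI : Fact p.Prime := ⟨hp⟩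
  obtain ⟨a, b, hY⟩ := hYform
  set e : ZMod p := (ε : ZMod p) with he_def
  set x := X 0 0 with hx
  set y := X 0 1 with hy
  set z := X 1 0 with hz_def
  set w := X 1 1 with hw
  have hXe : X = !![x, y; z, w] := Matrix.eta_fin_two X
  have htr' : x + w = a + a := by
    simpa [hY, Matrix.trace_fin_two] using htr
  have hdet' : x * w - y * z = a * a - b * (b * e) := by
    simpa [hY, Matrix.det_fin_two] using hdet
  have hsimple' : (x + w) ^ 2 - 4 * (x * w - y * z) ≠ 0 := by
    simpa [Matrix.trace_fin_two, Matrix.det_fin_two] using hsimple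
  have hodd : p % 2 = 1 := hp.eq_two_or_odd.resolve_left hp2
  have h2 : (2 : ZMod p) ≠ 0 := by
    intro h
    have h2' : ((2 : ℕ) : ZMod p) = 0 := by exact_mod_cast h
    rw [ZMod.natCast_eq_zero_iff] at h2'
    exact hp2 ((Nat.prime_dvd_prime_iff_eq hp Nat.prime_two).mp h2')
  have he : e ≠ 0 := fun h => hεns ⟨0, by rw [h, mul_zero]⟩
  have hkey : (x + w) ^ 2 - 4 * (x * w - y * z) = (2 * b) ^ 2 * e := by
    linear_combination (x + w + a + a) * htr' - 4 * hdet'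
  have hb : b ≠ 0 := by
    intro h
    apply hsimple'
    rw [hkey, h]
    ring
  have hz : z ≠ 0 := by
    intro h
    apply hεns
    refine ⟨(x - w) * (2 * b)⁻¹, ?_⟩
    have h2b : (2 * b : ZMod p) ≠ 0 := mul_ne_zero h2 hb
    rw [h] at hkey
    field_simp [← he_def]
    linear_combination -hkey
  set δ : ZMod p := b * e * z⁻¹ with hδ_def
  have hδ : δ ≠ 0 := mul_ne_zero (mul_ne_zero hb he) (inv_ne_zero hz)
  obtain ⟨s, v, hsv⟩ := aux_quad_surj p hodd
    ((x + w) ^ 2 - 4 * (x * w - y * z)) (4 * δ) hsimple'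
  set u : ZMod p := (s - v * (x + w)) * (2 : ZMod p)⁻¹ with hu_def
  have hu2 : 2 * u = s - v * (x + w) := by
    rw [hu_def]
    field_simp
  have hN : u ^ 2 + u * v * (x + w) + v ^ 2 * (x * w - y * z) = δ := by
    have h4 : (4 : ZMod p) ≠ 0 := by
      intro h
      apply h2
      have : (2 : ZMod p) * 2 = 0 := by rw [← h]; norm_num
      rcases mul_eq_zero.mp this with h' | h' <;> exact h'
    apply mul_left_cancel₀ h4
    have hs : (2 * u + v * (x + w)) ^ 2
        - ((x + w) ^ 2 - 4 * (x * w - y * z)) * v ^ 2 = 4 * δ := by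
      rw [hu2]
      linear_combination hsv
    linear_combination hs
  -- matrices
  set Cc : Matrix (Fin 2) (Fin 2) (ZMod p) := !![0, -(x * w - y * z); 1, x + w] with hCc
  set P : Matrix (Fin 2) (Fin 2) (ZMod p) := !![1, x; 0, z] with hP
  set Pi : Matrix (Fin 2) (Fin 2) (ZMod p) := !![1, -(x * z⁻¹); 0, z⁻¹] with hPi
  set Q : Matrix (Fin 2) (Fin 2) (ZMod p) := !![1, a; 0, b * e] with hQ
  set W : Matrix (Fin 2) (Fin 2) (ZMod p) :=
    !![δ⁻¹ * (u + v * w), δ⁻¹ * (-(v * y)); δ⁻¹ * (-(v * z)), δ⁻¹ * (u + v * x)] with hW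
  have hPPi : P * Pi = 1 := by
    rw [hP, hPi, Matrix.mul_fin_two, Matrix.one_fin_two]
    congr 1 <;> field_simp <;> simp [hz]
  have hPiP : Pi * P = 1 := by
    rw [hP, hPi, Matrix.mul_fin_two, Matrix.one_fin_two]
    congr 1 <;> field_simp <;> simp [hz]
  have hXP : X * P = P * Cc := by
    rw [hXe, hP, hCc, Matrix.mul_fin_two, Matrix.mul_fin_two]
    congr 1 <;> ring
  have hPiX : Pi * X = Cc * Pi := by
    have h1 : Pi * X * P = Cc := by
      rw [Matrix.mul_assoc, hXP, ← Matrix.mul_assoc, hPiP, Matrix.one_mul]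
    calc Pi * X = Pi * X * 1 := (mul_one _).symm
    _ = Pi * X * (P * Pi) := by rw [hPPi]
    _ = Pi * X * P * Pi := by rw [Matrix.mul_assoc (Pi * X)]
    _ = Cc * Pi := by rw [h1]
  have hYQ : Y * Q = Q * Cc := by
    rw [hY, hQ, hCc]
    ext i j
    fin_cases i <;> fin_cases j <;>
      simp [Matrix.mul_apply, Fin.sum_univ_succ]
    · linear_combination hdet' - a * htr'
    · linear_combination -(b * e) * htr'
  have hWX : W * X = X * W := by
    rw [hXe, hW, Matrix.mul_fin_two, Matrix.mul_fin_two]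
    congr 1 <;> ring
  set M : Matrix (Fin 2) (Fin 2) (ZMod p) := Q * Pi * W with hM
  have hdetW : W.det = δ⁻¹ := by
    rw [hW, Matrix.det_fin_two_of]
    have h1 : (u + v * w) * (u + v * x) - v * y * (v * z) = δ := by linear_combination hN
    calc δ⁻¹ * (u + v * w) * (δ⁻¹ * (u + v * x)) - δ⁻¹ * -(v * y) * (δ⁻¹ * -(v * z))
        = δ⁻¹ * δ⁻¹ * ((u + v * w) * (u + v * x) - v * y * (v * z)) := by ring
    _ = δ⁻¹ * δ⁻¹ * δ := by rw [h1]
    _ = δ⁻¹ := by rw [mul_assoc, inv_mul_cancel₀ hδ, mul_one]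
  have hdetM : M.det = 1 := by
    rw [hM, Matrix.det_mul, Matrix.det_mul, hdetW, hQ, hPi,
      Matrix.det_fin_two_of, Matrix.det_fin_two_of, hδ_def]
    field_simp
    ring
  have hMX : M * X = Y * M := by
    calc M * X = Q * Pi * (W * X) := by rw [hM, Matrix.mul_assoc]
    _ = Q * Pi * (X * W) := by rw [hWX]
    _ = Q * (Pi * X) * W := by rw [Matrix.mul_assoc Q, Matrix.mul_assoc Q, Matrix.mul_assoc Pi]
    _ = Q * (Cc * Pi) * W := by rw [hPiX]
    _ = Q * Cc * Pi * W := by rw [Matrix.mul_assoc Q Cc Pi]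
    _ = Y * Q * Pi * W := by rw [hYQ]
    _ = Y * M := by rw [hM, Matrix.mul_assoc, Matrix.mul_assoc, Matrix.mul_assoc]
  refine ⟨⟨M, hdetM⟩, ?_⟩
  show M * X * (Matrix.adjugate M) = Y
  rw [hMX, Matrix.mul_assoc, Matrix.mul_adjugate, hdetM, one_smul, mul_one]
end

section
/- Let D and s be integers with D not divisible by p and s² ≡ εD (mod 4p²). Then for every integral binary quadratic form [A,B,C] with B² − 4AC = D there exists M ∈ SL₂(ℤ) such that [A,B,C]·M ∈ Q_{ns,D,s}. In particular, if s² ≡ εD (mod 4p²) and p ∤ D, the set Q_{ns,D,s} is nonempty whenever some integral form of discriminant D exists. -/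
open Polynomial

lemma two_ne_zero_zmod (p : ℕ) [Fact p.Prime] (hp2 : p ≠ 2) : (2 : ZMod p) ≠ 0 := by
  have : ((2 : ℕ) : ZMod p) ≠ 0 := by
    rw [Ne, ZMod.natCast_eq_zero_iff]
    exact fun h => hp2 ((Nat.prime_dvd_prime_iff_eq Fact.out Nat.prime_two).mp h)
  simpa using this

lemma rep_aux (p : ℕ) [Fact p.Prime] (hp2 : p ≠ 2) (a b c t : ZMod p)
    (hd : b ^ 2 - 4 * a * c ≠ 0) (ha : a ≠ 0) :
    ∃ x y : ZMod p, a * x ^ 2 + b * x * y + c * y ^ 2 = t := by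
  have hcard : Fintype.card (ZMod p) % 2 = 1 := by
    rw [ZMod.card]
    exact Nat.odd_iff.mp ((Fact.out : p.Prime).odd_of_ne_two hp2)
  obtain ⟨u, y, huv⟩ := FiniteField.exists_root_sum_quadratic
    (f := X ^ 2 - Polynomial.C (4 * a * t))
    (g := Polynomial.C (-(b ^ 2 - 4 * a * c)) * X ^ 2)
    (degree_X_pow_sub_C (by norm_num) _)
    (degree_C_mul_X_pow 2 (neg_ne_zero.mpr hd)) hcard
  simp only [eval_sub, eval_pow, eval_X, eval_C, eval_mul, eval_neg] at huv
  have h2 : (2 : ZMod p) ≠ 0 := two_ne_zero_zmod p hp2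
  have h2a : 2 * a ≠ 0 := mul_ne_zero h2 ha
  set x : ZMod p := (u - b * y) * (2 * a)⁻¹ with hxdef
  have hx : 2 * a * x = u - b * y := by
    rw [hxdef, mul_comm (u - b * y), ← mul_assoc, mul_inv_cancel₀ h2a, one_mul]
  refine ⟨x, y, ?_⟩
  have h4 : (4 : ZMod p) * a ≠ 0 := by
    have : (4 : ZMod p) = 2 * 2 := by norm_num
    rw [this]; exact mul_ne_zero (mul_ne_zero h2 h2) ha
  have key : (4 * a) * (a * x ^ 2 + b * x * y + c * y ^ 2 - t) = 0 := by
    linear_combination (2 * a * x + b * y + u) * hx + huv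
  have := (mul_eq_zero.mp key).resolve_left h4
  linear_combination this

lemma rep (p : ℕ) [Fact p.Prime] (hp2 : p ≠ 2) (a b c t : ZMod p)
    (hd : b ^ 2 - 4 * a * c ≠ 0) :
    ∃ x y : ZMod p, a * x ^ 2 + b * x * y + c * y ^ 2 = t := by
  by_cases ha : a = 0
  · by_cases hc : c = 0
    · have hb : b ≠ 0 := by
        intro hb; apply hd; rw [ha, hb]; ring
      exact ⟨1, t * b⁻¹, by
        rw [ha, hc]
        field_simp
        ring⟩
    · obtain ⟨x, y, h⟩ := rep_aux p hp2 c b a t (fun h => hd (by linear_combination h)) hc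
      exact ⟨y, x, by linear_combination h⟩
  · exact rep_aux p hp2 a b c t hd ha

lemma lift_coprime (p x y : ℤ) (h : IsCoprime p x) :
    ∃ γ : ℤ, IsCoprime x γ ∧ p ∣ γ - y := by
  obtain ⟨u, v, huv⟩ := h
  refine ⟨y + p * (u * (1 - y)), ⟨v * (1 - y), 1, by linear_combination (1 - y) * huv⟩,
    ⟨u * (1 - y), by ring⟩⟩

lemma assemble (p ε D s A B C α β γ δ A' B' C' : ℤ)
    (hdet : α * δ - β * γ = 1)
    (hA' : A' = A * α ^ 2 + B * α * γ + C * γ ^ 2)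
    (hB' : B' = 2 * A * α * β + B * (α * δ + β * γ) + 2 * C * γ * δ)
    (hC' : C' = A * β ^ 2 + B * β * δ + C * δ ^ 2)
    (hdisc : B ^ 2 - 4 * A * C = D)
    (hB'2 : p ^ 2 ∣ B')
    (hA's : p ∣ 2 * A' - s)
    (hp2D : p ^ 2 ∣ ε * D - s ^ 2)
    (hcopA : IsCoprime p (4 * A'))
    (hcopA2 : IsCoprime (p ^ 2) (4 * A'))
    (h4 : (4 : ℤ) ∣ ε * D - s ^ 2)
    (hε4 : (4 : ℤ) ∣ ε - 1) :
    B' ≡ 0 [ZMOD p] ∧ A' + C' * ε ≡ 0 [ZMOD p] ∧ B' ^ 2 - 4 * A' * C' = D ∧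
    A' - C' * ε ≡ s [ZMOD p ^ 2] ∧ B' ≡ s [ZMOD 2] := by
  have hdisc' : B' ^ 2 - 4 * A' * C' = D := by
    rw [hA', hB', hC']
    linear_combination ((α * δ - β * γ + 1) * (B ^ 2 - 4 * A * C)) * hdet + hdisc
  have hACD : p ^ 2 ∣ 4 * A' * C' + D := by
    have h := hB'2.mul_right B'
    have e : 4 * A' * C' + D = B' * B' := by linear_combination -hdisc'
    rw [e]; exact h
  obtain ⟨k1, e1⟩ := hA's
  obtain ⟨k2, e2⟩ := hACD
  obtain ⟨k3, e3⟩ := hp2D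
  refine ⟨Int.modEq_zero_iff_dvd.mpr ((dvd_pow_self p two_ne_zero).trans hB'2), ?_, hdisc', ?_, ?_⟩
  · have key : p ∣ 4 * A' * (A' + C' * ε) :=
      ⟨k1 * (2 * A' + s) + p * (ε * k2 - k3),
        by linear_combination (2 * A' + s) * e1 + ε * e2 - e3⟩
    exact Int.modEq_zero_iff_dvd.mpr (hcopA.dvd_of_dvd_mul_left key)
  · have key2 : p ^ 2 ∣ 4 * A' * (A' - C' * ε - s) :=
      ⟨k1 ^ 2 + k3 - ε * k2,
        by linear_combination ((2 * A' - s) + p * k1) * e1 + e3 - ε * e2⟩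
    have h := hcopA2.dvd_of_dvd_mul_left key2
    exact (Int.modEq_iff_dvd.mpr (by rwa [show s - (A' - C' * ε) = -(A' - C' * ε - s) by ring, dvd_neg]))
  · have hBB' : (2 : ℤ) ∣ B' - B :=
      ⟨A * α * β + B * β * γ + C * γ * δ, by rw [hB']; linear_combination B * hdet⟩
    obtain ⟨m1, f1⟩ := h4
    obtain ⟨m2, f2⟩ := hε4
    have hsB2 : (4 : ℤ) ∣ s ^ 2 - B ^ 2 :=
      ⟨-m1 + m2 * D - A * C, by linear_combination -f1 + D * f2 - hdisc⟩
    have h2sB : (2 : ℤ) ∣ (s - B) * (s + B) := by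
      have : (s - B) * (s + B) = s ^ 2 - B ^ 2 := by ring
      rw [this]; exact (dvd_trans ⟨2, by norm_num⟩ hsB2)
    have hsB : (2 : ℤ) ∣ s - B := by
      rcases (Int.prime_two.dvd_mul.mp h2sB) with h | h
      · exact h
      · obtain ⟨k, hk⟩ := h
        exact ⟨k - B, by linear_combination hk⟩
    have : (2 : ℤ) ∣ s - B' := by
      have e : s - B' = (s - B) - (B' - B) := by ring
      rw [e]; exact dvd_sub hsB hBB'
    exact Int.modEq_iff_dvd.mpr this

open Polynomial


/-- Surjectivity step in Proposition 5.3 of the paper. If `p ∤ D`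
and `s² ≡ εD (mod 4p²)`, then every integral binary quadratic form of
discriminant `D` can be carried into `Q_{ns,D,s}` by some `M ∈ SL₂(ℤ)`.
In particular `Q_{ns,D,s}` is nonempty whenever a form of discriminant `D`
exists. -/
theorem stmt_9 (p : ℕ) (hp : p.Prime) (hp2 : p ≠ 2)
    (ε : ℤ) (hε1 : ε ≡ 1 [ZMOD 4]) (hεns : ¬ IsSquare (ε : ZMod p))
    (D s : ℤ) (hpD : ¬ (p : ℤ) ∣ D)
    (hsD : s ^ 2 ≡ ε * D [ZMOD (4 * (p : ℤ) ^ 2)])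
    (A B C : ℤ) (hdisc : B ^ 2 - 4 * A * C = D) :
    ∃ α β γ δ : ℤ, α * δ - β * γ = 1 ∧
      ∃ A' B' C' : ℤ,
        A' = A * α ^ 2 + B * α * γ + C * γ ^ 2 ∧
        B' = 2 * A * α * β + B * (α * δ + β * γ) + 2 * C * γ * δ ∧
        C' = A * β ^ 2 + B * β * δ + C * δ ^ 2 ∧
        B' ≡ 0 [ZMOD (p : ℤ)] ∧ A' + C' * ε ≡ 0 [ZMOD (p : ℤ)] ∧
        B' ^ 2 - 4 * A' * C' = D ∧
        A' - C' * ε ≡ s [ZMOD ((p : ℤ) ^ 2)] ∧ B' ≡ s [ZMOD 2] := by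
  haveI : Fact p.Prime := ⟨hp⟩
  have hpI : Prime (p : ℤ) := Nat.prime_iff_prime_int.mp hp
  have hdvd : (4 * (p : ℤ) ^ 2) ∣ ε * D - s ^ 2 := Int.ModEq.dvd hsD
  have hp2D : ((p : ℤ)) ^ 2 ∣ ε * D - s ^ 2 := dvd_trans ⟨4, by ring⟩ hdvd
  have h4D : (4 : ℤ) ∣ ε * D - s ^ 2 := dvd_trans ⟨(p : ℤ) ^ 2, by ring⟩ hdvd
  have hε4 : (4 : ℤ) ∣ ε - 1 := Int.ModEq.dvd hε1.symm
  have hD0 : ((D : ℤ) : ZMod p) ≠ 0 := fun h => hpD ((ZMod.intCast_zmod_eq_zero_iff_dvd D p).mp h)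
  have hε0 : ((ε : ℤ) : ZMod p) ≠ 0 := fun h => hεns ⟨0, by rw [h, mul_zero]⟩
  have h2z : (2 : ZMod p) ≠ 0 := two_ne_zero_zmod p hp2
  have h4z : (4 : ZMod p) ≠ 0 := by
    have e : (4 : ZMod p) = 2 * 2 := by norm_num
    rw [e]; exact mul_ne_zero h2z h2z
  have hps : ¬ (p : ℤ) ∣ s := by
    intro h
    have hs2 : (p : ℤ) ∣ s ^ 2 := by rw [pow_two]; exact h.mul_left s
    have hεD : (p : ℤ) ∣ ε * D := by
      have : (p : ℤ) ∣ ε * D - s ^ 2 := (dvd_pow_self (p : ℤ) two_ne_zero).trans hp2D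
      have e : ε * D = (ε * D - s ^ 2) + s ^ 2 := by ring
      rw [e]; exact dvd_add this hs2
    rcases hpI.dvd_mul.mp hεD with h' | h'
    · exact hε0 ((ZMod.intCast_zmod_eq_zero_iff_dvd ε p).mpr h')
    · exact hpD h'
  -- representation mod p
  have hcast : ((B : ZMod p)) ^ 2 - 4 * (A : ZMod p) * (C : ZMod p) = ((D : ℤ) : ZMod p) := by
    have := congrArg (fun z : ℤ => (z : ZMod p)) hdisc
    push_cast at this
    exact this
  have hd' : (2 * (B : ZMod p)) ^ 2 - 4 * (2 * (A : ZMod p)) * (2 * (C : ZMod p)) ≠ 0 := by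
    have e : (2 * (B : ZMod p)) ^ 2 - 4 * (2 * (A : ZMod p)) * (2 * (C : ZMod p))
        = 4 * ((D : ℤ) : ZMod p) := by linear_combination 4 * hcast
    rw [e]; exact mul_ne_zero h4z hD0
  obtain ⟨x, y, hxy⟩ := rep p hp2 (2 * (A : ZMod p)) (2 * (B : ZMod p)) (2 * (C : ZMod p))
    ((s : ZMod p)) hd'
  set x₀ : ℤ := ZMod.cast x with hx₀def
  set y₀ : ℤ := ZMod.cast y with hy₀def
  have hx₀ : ((x₀ : ℤ) : ZMod p) = x := ZMod.intCast_zmod_cast x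
  have hy₀ : ((y₀ : ℤ) : ZMod p) = y := ZMod.intCast_zmod_cast y
  have hnd : ¬ ((p : ℤ) ∣ x₀ ∧ (p : ℤ) ∣ y₀) := by
    rintro ⟨h1, h2⟩
    have hx0 : x = 0 := by rw [← hx₀]; exact (ZMod.intCast_zmod_eq_zero_iff_dvd x₀ p).mpr h1
    have hy0 : y = 0 := by rw [← hy₀]; exact (ZMod.intCast_zmod_eq_zero_iff_dvd y₀ p).mpr h2
    have : ((s : ℤ) : ZMod p) = 0 := by rw [← hxy, hx0, hy0]; ring
    exact hps ((ZMod.intCast_zmod_eq_zero_iff_dvd s p).mp this)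
  obtain ⟨α, γ, hcop, hα, hγ⟩ :
      ∃ α γ : ℤ, IsCoprime α γ ∧ (p : ℤ) ∣ α - x₀ ∧ (p : ℤ) ∣ γ - y₀ := by
    by_cases hx : (p : ℤ) ∣ x₀
    · have hy : ¬ (p : ℤ) ∣ y₀ := fun h => hnd ⟨hx, h⟩
      obtain ⟨a, hc, hd⟩ := lift_coprime (p : ℤ) y₀ x₀ (hpI.coprime_iff_not_dvd.mpr hy)
      exact ⟨a, y₀, hc.symm, hd, by simp⟩
    · obtain ⟨g, hc, hd⟩ := lift_coprime (p : ℤ) x₀ y₀ (hpI.coprime_iff_not_dvd.mpr hx)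
      exact ⟨x₀, g, hc, by simp, hd⟩
  obtain ⟨d0, b0, hdb⟩ := hcop
  have hαx : ((α : ℤ) : ZMod p) = ((x₀ : ℤ) : ZMod p) := by
    have := (ZMod.intCast_zmod_eq_zero_iff_dvd (α - x₀) p).mpr hα
    push_cast at this
    linear_combination this
  have hγy : ((γ : ℤ) : ZMod p) = ((y₀ : ℤ) : ZMod p) := by
    have := (ZMod.intCast_zmod_eq_zero_iff_dvd (γ - y₀) p).mpr hγ
    push_cast at this
    linear_combination this
  have hA's : (p : ℤ) ∣ 2 * (A * α ^ 2 + B * α * γ + C * γ ^ 2) - s := by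
    rw [← ZMod.intCast_zmod_eq_zero_iff_dvd]
    push_cast
    rw [hαx, hγy, hx₀, hy₀]
    linear_combination hxy
  have hpA' : ¬ (p : ℤ) ∣ 2 * (A * α ^ 2 + B * α * γ + C * γ ^ 2) := by
    intro h
    exact hps (by simpa using dvd_sub h hA's)
  have hpA'' : ¬ (p : ℤ) ∣ (A * α ^ 2 + B * α * γ + C * γ ^ 2) := by
    intro h
    exact hpA' (h.mul_left 2)
  have hp4 : ¬ (p : ℤ) ∣ 4 := by
    intro h
    have h22 : (p : ℤ) ∣ 2 ^ 2 := by norm_num; exact h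
    have h2 : (p : ℤ) ∣ 2 := hpI.dvd_of_dvd_pow h22
    have : p ∣ 2 := by exact_mod_cast h2
    exact hp2 ((Nat.prime_dvd_prime_iff_eq hp Nat.prime_two).mp this)
  have hcopA : IsCoprime (p : ℤ) (4 * (A * α ^ 2 + B * α * γ + C * γ ^ 2)) :=
    hpI.coprime_iff_not_dvd.mpr (by
      intro h
      rcases hpI.dvd_mul.mp h with h' | h'
      · exact hp4 h'
      · exact hpA'' h')
  have hcop2A : IsCoprime ((p : ℤ) ^ 2) (2 * (A * α ^ 2 + B * α * γ + C * γ ^ 2)) :=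
    (hpI.coprime_iff_not_dvd.mpr hpA').pow_left
  obtain ⟨u, v, huv⟩ := hcop2A
  refine ⟨α, -b0 + (-(v * (2 * A * α * (-b0) + B * (α * d0 + (-b0) * γ) + 2 * C * γ * d0))) * α,
    γ, d0 + (-(v * (2 * A * α * (-b0) + B * (α * d0 + (-b0) * γ) + 2 * C * γ * d0))) * γ,
    by linear_combination hdb,
    A * α ^ 2 + B * α * γ + C * γ ^ 2, _, _, rfl, rfl, rfl, ?_⟩
  have hdet : α * (d0 + (-(v * (2 * A * α * (-b0) + B * (α * d0 + (-b0) * γ) + 2 * C * γ * d0))) * γ)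
      - (-b0 + (-(v * (2 * A * α * (-b0) + B * (α * d0 + (-b0) * γ) + 2 * C * γ * d0))) * α) * γ = 1 := by
    linear_combination hdb
  have hB'2 : ((p : ℤ)) ^ 2 ∣
      2 * A * α * (-b0 + (-(v * (2 * A * α * (-b0) + B * (α * d0 + (-b0) * γ) + 2 * C * γ * d0))) * α)
      + B * (α * (d0 + (-(v * (2 * A * α * (-b0) + B * (α * d0 + (-b0) * γ) + 2 * C * γ * d0))) * γ)
          + (-b0 + (-(v * (2 * A * α * (-b0) + B * (α * d0 + (-b0) * γ) + 2 * C * γ * d0))) * α) * γ)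
      + 2 * C * γ * (d0 + (-(v * (2 * A * α * (-b0) + B * (α * d0 + (-b0) * γ) + 2 * C * γ * d0))) * γ) :=
    ⟨(2 * A * α * (-b0) + B * (α * d0 + (-b0) * γ) + 2 * C * γ * d0) * u,
      by linear_combination (-(2 * A * α * (-b0) + B * (α * d0 + (-b0) * γ) + 2 * C * γ * d0)) * huv⟩
  exact assemble (p : ℤ) ε D s A B C α _ γ _ _ _ _ hdet rfl rfl rfl hdisc hB'2
    hA's hp2D hcopA (hcopA.pow_left) h4D hε4
end

section
/- Let X = (a, b; c, d) ∈ M_ns with trace t and determinant n, set D = t² − 4n, and assume p ∤ D. Let A = c, B = a − d, C = −b. Then gcd(A, B, C) = 1 if and only if the following optimality condition holds: for all rational numbers λ₁, λ₂ such that the matrix λ₁·I + λ₂·X has integer entries and belongs to M_ns, one has λ₁ ∈ ℤ and λ₂ ∈ ℤ. -/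
lemma den_dvd_of_mul_int (l : ℚ) (m k : ℤ) (h : l * (m : ℚ) = (k : ℚ)) :
    (l.den : ℤ) ∣ m := by
  have hd : (l.den : ℚ) ≠ 0 := by exact_mod_cast l.den_ne_zero
  have h1 : (l.num : ℚ) * m = k * l.den := by
    rw [← Rat.num_div_den l] at h
    field_simp at h
    linarith [h]
  have h2 : l.num * m = k * l.den := by exact_mod_cast h1
  have hdvd : (l.den : ℤ) ∣ l.num * m := ⟨k, by linarith [h2]⟩
  have hcop : IsCoprime (l.den : ℤ) l.num := by
    rw [Int.isCoprime_iff_gcd_eq_one, Int.gcd, Int.natAbs_natCast, Nat.gcd_comm]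
    exact l.reduced
  exact hcop.dvd_of_dvd_mul_left hdvd

lemma int_of_den_dvd (l : ℚ) (h : (l.den : ℤ) ∣ 1) : ∃ k : ℤ, l = k := by
  refine ⟨l.num, ?_⟩
  have : l.den = 1 := Nat.eq_one_of_dvd_one (by exact_mod_cast h)
  rw [← Rat.num_div_den l, this]
  simp

/-- Proposition 4.1 of the paper (optimality criterion). Let
`X = (a,b;c,d) ∈ M_ns` with trace `t`, determinant `n`, `D = t² − 4n` and `p ∤ D`.
Set `A = c`, `B = a − d`, `C = −b`. Then `gcd(A,B,C) = 1` iff for all rationals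
`λ₁, λ₂` such that `λ₁·I + λ₂·X` has integer entries and belongs to `M_ns`, both
`λ₁` and `λ₂` are integers. -/
theorem stmt_11 (p : ℕ) (hp : p.Prime) (hp2 : p ≠ 2)
    (ε : ℤ) (hε1 : ε ≡ 1 [ZMOD 4]) (hεns : ¬ IsSquare (ε : ZMod p))
    (a b c d : ℤ)
    (had : a ≡ d [ZMOD (p : ℤ)]) (hbc : b * ε ≡ c [ZMOD (p : ℤ)])
    (t n D : ℤ) (ht : t = a + d) (hn : n = a * d - b * c) (hD : D = t ^ 2 - 4 * n)
    (hpD : ¬ (p : ℤ) ∣ D)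
    (A B C : ℤ) (hA : A = c) (hB : B = a - d) (hC : C = -b) :
    (Int.gcd (Int.gcd A B : ℤ) C = 1) ↔
      ∀ l₁ l₂ : ℚ,
        (∃ a' b' c' d' : ℤ,
          (a' : ℚ) = l₁ + l₂ * a ∧ (b' : ℚ) = l₂ * b ∧
          (c' : ℚ) = l₂ * c ∧ (d' : ℚ) = l₁ + l₂ * d ∧
          a' ≡ d' [ZMOD (p : ℤ)] ∧ b' * ε ≡ c' [ZMOD (p : ℤ)]) →
        (∃ k : ℤ, l₁ = k) ∧ (∃ k : ℤ, l₂ = k) := by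
  subst hD hn ht
  rw [hA, hB, hC]
  have hDeq : (a + d) ^ 2 - 4 * (a * d - b * c) = (a - d) ^ 2 + 4 * (b * c) := by ring
  constructor
  · intro hg l₁ l₂ ⟨a', b', c', d', ha', hb', hc', hd', _, _⟩
    have hdb : (l₂.den : ℤ) ∣ b := den_dvd_of_mul_int l₂ b b' hb'.symm
    have hdc : (l₂.den : ℤ) ∣ c := den_dvd_of_mul_int l₂ c c' hc'.symm
    have had' : l₂ * ((a - d : ℤ) : ℚ) = ((a' - d' : ℤ) : ℚ) := by
      push_cast; linarith [ha', hd']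
    have hdad : (l₂.den : ℤ) ∣ a - d := den_dvd_of_mul_int l₂ (a - d) (a' - d') had'
    have hdg : (l₂.den : ℤ) ∣ (Int.gcd (Int.gcd c (a - d) : ℤ) (-b) : ℤ) :=
      Int.dvd_coe_gcd (Int.dvd_coe_gcd hdc hdad) (Dvd.dvd.neg_right hdb)
    rw [hg] at hdg
    obtain ⟨k, hk⟩ := int_of_den_dvd l₂ (by exact_mod_cast hdg)
    refine ⟨⟨a' - k * a, ?_⟩, ⟨k, hk⟩⟩
    rw [hk] at ha'
    push_cast
    linarith [ha']
  · intro hR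
    by_contra hg
    obtain ⟨q, hq, hqg⟩ := Nat.exists_prime_and_dvd hg
    have hqg' : (q : ℤ) ∣ (Int.gcd (Int.gcd c (a - d) : ℤ) (-b) : ℤ) :=
      Int.natCast_dvd_natCast.mpr hqg
    have hqc : (q : ℤ) ∣ c := hqg'.trans ((Int.gcd_dvd_left _ _).trans (Int.gcd_dvd_left _ _))
    have hqad : (q : ℤ) ∣ a - d := hqg'.trans ((Int.gcd_dvd_left _ _).trans (Int.gcd_dvd_right _ _))
    have hqb : (q : ℤ) ∣ b := dvd_neg.mp (hqg'.trans (Int.gcd_dvd_right _ _))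
    have hpad : (p : ℤ) ∣ a - d := (Int.modEq_iff_dvd.mp had.symm)
    by_cases hqp : q = p
    · subst hqp
      exact hpD (hDeq ▸ dvd_add (dvd_pow hpad two_ne_zero)
        (Dvd.dvd.mul_left (hqb.mul_right c) 4))
    · -- q ≠ p : construct the counterexample
      have hq0 : (q : ℚ) ≠ 0 := by exact_mod_cast hq.ne_zero
      obtain ⟨b2, hb2⟩ := hqb
      obtain ⟨c2, hc2⟩ := hqc
      obtain ⟨e2, he2⟩ := hqad
      have hpq : ¬ (p : ℤ) ∣ (q : ℤ) := by
        intro h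
        exact hqp ((Nat.prime_dvd_prime_iff_eq hp hq).mp (Int.ofNat_dvd.mp h)).symm
      have hpInt : Prime (p : ℤ) := Nat.prime_iff_prime_int.mp hp
      have hpe2 : (p : ℤ) ∣ -e2 := by
        rcases hpInt.dvd_mul.mp (he2 ▸ hpad) with h | h
        · exact absurd h hpq
        · exact h.neg_right
      have hpbc : (p : ℤ) ∣ c - b * ε := Int.modEq_iff_dvd.mp hbc
      have hpbc2 : (p : ℤ) ∣ c2 - b2 * ε := by
        have heq : (q : ℤ) * (c2 - b2 * ε) = c - b * ε := by rw [hc2, hb2]; ring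
        rcases hpInt.dvd_mul.mp (heq ▸ hpbc) with h | h
        · exact absurd h hpq
        · exact h
      obtain ⟨_, k, hk⟩ := hR (-(a : ℚ) / q) (1 / q)
        ⟨0, b2, c2, -e2,
          by push_cast; field_simp; ring,
          by rw [hb2]; push_cast; field_simp,
          by rw [hc2]; push_cast; field_simp,
          by rw [show d = a - (q : ℤ) * e2 by linarith [he2]]; push_cast; field_simp; ring,
          Int.modEq_iff_dvd.mpr (by simpa using hpe2),
          Int.modEq_iff_dvd.mpr hpbc2⟩
      have h1 : (1 : ℚ) = k * q := by
        field_simp at hk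
        linarith [hk]
      have h2 : (1 : ℤ) = k * q := by exact_mod_cast h1
      have h3 : (q : ℤ) ∣ 1 := ⟨k, by rw [h2]; ring⟩
      exact hq.one_lt.ne' (Nat.eq_one_of_dvd_one (Int.ofNat_dvd.mp h3))
end

section
/- The dual lattice L_ns^∨ = {x ∈ V : β(x,y) ∈ ℤ for all y ∈ L_ns} is exactly the set of matrices (B, 2C; −2A, −B) with A, B, C ∈ ℤ such that B ≡ 0 (mod p) and A ≡ −Cε (mod p). -/
private lemma beval_aux (p : ℕ) (hp : (p:ℚ) ≠ 0) (x : Matrix (Fin 2) (Fin 2) ℚ)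
    (hx : x 1 1 = - x 0 0) (B' C' A' : ℚ) :
    -(((x * (!![B', 2*C'; -2*A', -B'] : Matrix (Fin 2) (Fin 2) ℚ).adjugate).trace)) / (4*(p:ℚ)^2)
      = (B' * x 0 0 - A' * x 0 1 + C' * x 1 0) / (2*(p:ℚ)^2) := by
  rw [Matrix.adjugate_fin_two, Matrix.trace_fin_two]
  simp [Matrix.mul_apply, Fin.sum_univ_two, hx]
  field_simp
  ring

/-- Proposition 8.1 (1) of the paper. The dual lattice
`L_ns^∨ = {x ∈ V : β(x,y) ∈ ℤ for all y ∈ L_ns}` equals the set of matrices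
`(B, 2C; −2A, −B)` with `A, B, C ∈ ℤ`, `B ≡ 0 (mod p)` and `A ≡ −Cε (mod p)`. -/
theorem stmt_13 (p : ℕ) (hp : p.Prime) (hp2 : p ≠ 2)
    (ε : ℤ) (hε1 : ε ≡ 1 [ZMOD 4]) (hεns : ¬ IsSquare (ε : ZMod p))
    (bform : Matrix (Fin 2) (Fin 2) ℚ → Matrix (Fin 2) (Fin 2) ℚ → ℚ)
    (hbform : bform = fun x y => -((x * y.adjugate).trace) / (4 * (p : ℚ) ^ 2))
    (Lns : Set (Matrix (Fin 2) (Fin 2) ℚ))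
    (hLns : Lns = {x | ∃ A B C : ℤ,
      x = !![(B : ℚ), 2 * (C : ℚ); -2 * (A : ℚ), -(B : ℚ)] ∧
      A ≡ 0 [ZMOD (p : ℤ)] ∧ B ≡ 0 [ZMOD (p : ℤ)] ∧ C ≡ 0 [ZMOD (p : ℤ)] ∧
      B ≡ 0 [ZMOD 2] ∧ A ≡ ε * C [ZMOD ((p : ℤ) ^ 2)]}) :
    {x : Matrix (Fin 2) (Fin 2) ℚ | x.trace = 0 ∧ ∀ y ∈ Lns, ∃ k : ℤ, bform x y = k} =
      {x | ∃ A B C : ℤ,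
        x = !![(B : ℚ), 2 * (C : ℚ); -2 * (A : ℚ), -(B : ℚ)] ∧
        B ≡ 0 [ZMOD (p : ℤ)] ∧ A ≡ -(C * ε) [ZMOD (p : ℤ)]} := by
  subst hbform hLns
  have hpQ : (p:ℚ) ≠ 0 := Nat.cast_ne_zero.mpr hp.ne_zero
  have hne : (2*(p:ℚ)^2) ≠ 0 := by positivity
  ext x
  simp only [Set.mem_setOf_eq]
  constructor
  · rintro ⟨htr, h⟩
    rw [Matrix.trace_fin_two] at htr
    have hx11 : x 1 1 = - x 0 0 := by linarith
    -- generator 1 : (A,B,C) = (0, 2p, 0)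
    obtain ⟨k1, hk1⟩ := h !![((2*(p:ℤ) : ℤ):ℚ), 2*((0:ℤ):ℚ); -2*((0:ℤ):ℚ), -((2*(p:ℤ) : ℤ):ℚ)]
      ⟨0, 2*(p:ℤ), 0, rfl, Int.ModEq.refl 0,
        Int.modEq_zero_iff_dvd.mpr ⟨2, by ring⟩, Int.ModEq.refl 0,
        Int.modEq_zero_iff_dvd.mpr ⟨(p:ℤ), by ring⟩, by simp [Int.ModEq]⟩
    rw [beval_aux p hpQ x hx11] at hk1
    rw [div_eq_iff hne] at hk1
    push_cast at hk1
    have e1 : x 0 0 = (p:ℚ) * k1 :=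
      mul_left_cancel₀ (show (2*(p:ℚ)) ≠ 0 by positivity) (by linear_combination hk1)
    -- generator 2 : (A,B,C) = (p^2, 0, 0)
    obtain ⟨k2, hk2⟩ := h !![(((0:ℤ) : ℤ):ℚ), 2*((0:ℤ):ℚ); -2*(((p:ℤ)^2 : ℤ):ℚ), -(((0:ℤ) : ℤ):ℚ)]
      ⟨(p:ℤ)^2, 0, 0, rfl, Int.modEq_zero_iff_dvd.mpr ⟨(p:ℤ), by ring⟩,
        Int.ModEq.refl 0, Int.ModEq.refl 0, Int.ModEq.refl 0,
        by simpa using Int.modEq_zero_iff_dvd.mpr (dvd_refl ((p:ℤ)^2))⟩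
    rw [beval_aux p hpQ x hx11] at hk2
    rw [div_eq_iff hne] at hk2
    push_cast at hk2
    have e2 : x 0 1 = -2 * (k2:ℚ) :=
      mul_left_cancel₀ (show ((p:ℚ)^2) ≠ 0 by positivity) (by linear_combination -hk2)
    -- generator 3 : (A,B,C) = (ε*p, 0, p)
    obtain ⟨k3, hk3⟩ := h !![(((0:ℤ) : ℤ):ℚ), 2*(((p:ℤ)):ℚ); -2*((ε*(p:ℤ) : ℤ):ℚ), -(((0:ℤ) : ℤ):ℚ)]
      ⟨ε*(p:ℤ), 0, (p:ℤ), rfl, Int.modEq_zero_iff_dvd.mpr ⟨ε, by ring⟩,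
        Int.ModEq.refl 0, Int.modEq_zero_iff_dvd.mpr ⟨1, by ring⟩, Int.ModEq.refl 0,
        Int.ModEq.refl _⟩
    rw [beval_aux p hpQ x hx11] at hk3
    rw [div_eq_iff hne] at hk3
    push_cast at hk3
    have e3 : x 1 0 = (ε:ℚ) * x 0 1 + 2*(p:ℚ)*k3 :=
      mul_left_cancel₀ hpQ (by linear_combination hk3)
    refine ⟨ε*k2 - (p:ℤ)*k3, (p:ℤ)*k1, -k2, ?_, ?_, ?_⟩
    · ext i j
      fin_cases i <;> fin_cases j <;> simp <;> push_cast
      · linarith [e1]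
      · linarith [e2]
      · linear_combination e3 + (ε:ℚ) * e2
      · linarith [e1, hx11]
    · exact Int.modEq_zero_iff_dvd.mpr ⟨k1, rfl⟩
    · exact (Int.modEq_iff_dvd.mpr ⟨k3, by ring⟩)
  · rintro ⟨A, B, C, rfl, hB, hA⟩
    constructor
    · rw [Matrix.trace_fin_two]; simp
    · rintro y ⟨A', B', C', rfl, hA'0, hB'0, hC'0, hB'2, hAC⟩
      obtain ⟨b1, hb1⟩ : (p:ℤ) ∣ B := Int.modEq_zero_iff_dvd.mp hB
      obtain ⟨m, hm⟩ : (p:ℤ) ∣ -(C*ε) - A := hA.dvd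
      obtain ⟨u, hu⟩ : (2:ℤ) ∣ B' := Int.modEq_zero_iff_dvd.mp hB'2
      have hpu : (p:ℤ) ∣ u := by
        have hpB' : (p:ℤ) ∣ B' := Int.modEq_zero_iff_dvd.mp hB'0
        rw [hu] at hpB'
        rcases (Int.prime_iff_natAbs_prime.mpr (by simpa using hp)).dvd_mul.mp hpB' with h2 | h
        · exfalso
          have : p ∣ 2 := by exact_mod_cast h2
          exact hp2 ((Nat.prime_dvd_prime_iff_eq hp Nat.prime_two).mp this)
        · exact h
      obtain ⟨b2, hb2⟩ := hpu
      obtain ⟨t, ht⟩ : (p:ℤ) ∣ C' := Int.modEq_zero_iff_dvd.mp hC'0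
      obtain ⟨s, hs⟩ : ((p:ℤ)^2) ∣ ε*C' - A' := hAC.dvd
      have eA : A = -(C*ε) - (p:ℤ)*m := by linarith
      have eA' : A' = ε*C' - (p:ℤ)^2*s := by linarith
      refine ⟨b1*b2 + C*s + m*t, ?_⟩
      have hx11 : (!![(B : ℚ), 2 * (C : ℚ); -2 * (A : ℚ), -(B : ℚ)]) 1 1
          = - (!![(B : ℚ), 2 * (C : ℚ); -2 * (A : ℚ), -(B : ℚ)]) 0 0 := by simp
      rw [beval_aux p hpQ _ hx11, div_eq_iff hne]
      have qb1 : (B:ℚ) = (p:ℚ) * b1 := by exact_mod_cast congrArg (fun z : ℤ => (z:ℚ)) hb1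
      have qb2 : (B':ℚ) = 2*((p:ℚ)*b2) := by rw [hu, hb2]; push_cast; ring
      have qt : (C':ℚ) = (p:ℚ)*t := by exact_mod_cast congrArg (fun z : ℤ => (z:ℚ)) ht
      have qA : (A:ℚ) = -((C:ℚ)*(ε:ℚ)) - (p:ℚ)*m := by exact_mod_cast congrArg (fun z : ℤ => (z:ℚ)) eA
      have qA' : (A':ℚ) = (ε:ℚ)*(C':ℚ) - (p:ℚ)^2*s := by exact_mod_cast congrArg (fun z : ℤ => (z:ℚ)) eA'
      simp only [Matrix.cons_val', Matrix.cons_val_zero, Matrix.cons_val_one,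
        Matrix.head_cons, Matrix.empty_val', Matrix.cons_val_fin_one, Matrix.head_fin_const,
        Fin.isValue, Matrix.of_apply]
      push_cast
      rw [qb2, qb1, qA', qt, qA]
      ring
end

section
/- Let M = (α, β; γ, δ) ∈ SL₂(ℤ) satisfy α ≡ δ (mod p) and γ ≡ εβ (mod p), and let x ∈ L_ns^∨. Then M⁻¹·x·M ∈ L_ns^∨ and M⁻¹·x·M − x ∈ L_ns. That is, conjugation by such matrices preserves L_ns^∨ and acts trivially on the quotient L_ns^∨/L_ns. -/
/-- Proposition 8.1 (2), first part. If `M = (α, β; γ, δ) ∈ SL₂(ℤ)`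
satisfies `α ≡ δ` and `γ ≡ εβ (mod p)` (i.e. `M ∈ Γ_ns`), then for every
`x ∈ L_ns^∨` one has `M⁻¹·x·M ∈ L_ns^∨` and `M⁻¹·x·M − x ∈ L_ns`: conjugation
preserves `L_ns^∨` and acts trivially on the quotient `L_ns^∨/L_ns`. -/
theorem stmt_14 (p : ℕ) (hp : p.Prime) (hp2 : p ≠ 2)
    (ε : ℤ) (hε1 : ε ≡ 1 [ZMOD 4]) (hεns : ¬ IsSquare (ε : ZMod p))
    (bform : Matrix (Fin 2) (Fin 2) ℚ → Matrix (Fin 2) (Fin 2) ℚ → ℚ)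
    (hbform : bform = fun x y => -((x * y.adjugate).trace) / (4 * (p : ℚ) ^ 2))
    (Lns : Set (Matrix (Fin 2) (Fin 2) ℚ))
    (hLns : Lns = {x | ∃ A B C : ℤ,
      x = !![(B : ℚ), 2 * (C : ℚ); -2 * (A : ℚ), -(B : ℚ)] ∧
      A ≡ 0 [ZMOD (p : ℤ)] ∧ B ≡ 0 [ZMOD (p : ℤ)] ∧ C ≡ 0 [ZMOD (p : ℤ)] ∧
      B ≡ 0 [ZMOD 2] ∧ A ≡ ε * C [ZMOD ((p : ℤ) ^ 2)]})
    (LnsDual : Set (Matrix (Fin 2) (Fin 2) ℚ))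
    (hLnsDual : LnsDual =
      {x | x.trace = 0 ∧ ∀ y ∈ Lns, ∃ k : ℤ, bform x y = k})
    (α β γ δ : ℤ) (hdet : α * δ - β * γ = 1)
    (hαδ : α ≡ δ [ZMOD (p : ℤ)]) (hγβ : γ ≡ ε * β [ZMOD (p : ℤ)])
    (M : Matrix (Fin 2) (Fin 2) ℚ)
    (hM : M = !![(α : ℚ), (β : ℚ); (γ : ℚ), (δ : ℚ)])
    (x : Matrix (Fin 2) (Fin 2) ℚ) (hx : x ∈ LnsDual) :
    M⁻¹ * x * M ∈ LnsDual ∧ M⁻¹ * x * M - x ∈ Lns := by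
  subst hbform hLns hLnsDual hM
  obtain ⟨htr, hdual⟩ := hx
  have hpQ : (p : ℚ) ≠ 0 := Nat.cast_ne_zero.mpr hp.pos.ne'
  have hdetQ : (α : ℚ) * δ - β * γ = 1 := by exact_mod_cast hdet
  -- Step 1: extract the explicit shape of x from the dual conditions.
  obtain ⟨a, b, c, hxE, hpb, hpac⟩ :
      ∃ a b c : ℤ, x = !![(b : ℚ), 2 * (c : ℚ); -2 * (a : ℚ), -(b : ℚ)] ∧
        (p : ℤ) ∣ b ∧ (p : ℤ) ∣ (a + ε * c) := by
    have htr2 : x 0 0 + x 1 1 = 0 := by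
      simpa [Matrix.trace_fin_two] using htr
    have hx11 : x 1 1 = -(x 0 0) := by linarith
    have hE : x = !![x 0 0, x 0 1; x 1 0, -(x 0 0)] := by
      rw [← hx11]; exact Matrix.eta_fin_two x
    obtain ⟨k1, hk1⟩ := hdual !![((2*(p:ℤ) : ℤ) : ℚ), 2 * ((0:ℤ) : ℚ);
        -2 * ((0:ℤ) : ℚ), -((2*(p:ℤ) : ℤ) : ℚ)]
      ⟨0, 2*(p:ℤ), 0, rfl, Int.ModEq.refl 0,
        Int.modEq_zero_iff_dvd.mpr ⟨2, by ring⟩, Int.ModEq.refl 0,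
        Int.modEq_zero_iff_dvd.mpr ⟨(p:ℤ), by ring⟩, by simp [Int.ModEq]⟩
    obtain ⟨k2, hk2⟩ := hdual !![(((0:ℤ)) : ℚ), 2 * ((0:ℤ) : ℚ);
        -2 * (((p:ℤ)^2 : ℤ) : ℚ), -(((0:ℤ)) : ℚ)]
      ⟨(p:ℤ)^2, 0, 0, rfl, Int.modEq_zero_iff_dvd.mpr ⟨(p:ℤ), by ring⟩,
        Int.ModEq.refl 0, Int.ModEq.refl 0, Int.ModEq.refl 0,
        Int.modEq_iff_dvd.mpr ⟨-1, by ring⟩⟩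
    obtain ⟨k3, hk3⟩ := hdual !![(((0:ℤ)) : ℚ), 2 * (((p:ℤ)^2 : ℤ) : ℚ);
        -2 * ((0:ℤ) : ℚ), -(((0:ℤ)) : ℚ)]
      ⟨0, 0, (p:ℤ)^2, rfl, Int.ModEq.refl 0, Int.ModEq.refl 0,
        Int.modEq_zero_iff_dvd.mpr ⟨(p:ℤ), by ring⟩, Int.ModEq.refl 0,
        Int.modEq_iff_dvd.mpr ⟨ε, by ring⟩⟩
    obtain ⟨k4, hk4⟩ := hdual !![(((0:ℤ)) : ℚ), 2 * (((p:ℤ)) : ℚ);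
        -2 * ((ε*(p:ℤ) : ℤ) : ℚ), -(((0:ℤ)) : ℚ)]
      ⟨ε*(p:ℤ), 0, (p:ℤ), rfl, Int.modEq_zero_iff_dvd.mpr ⟨ε, by ring⟩,
        Int.ModEq.refl 0, Int.modEq_zero_iff_dvd.mpr ⟨1, by ring⟩,
        Int.ModEq.refl 0, Int.ModEq.refl _⟩
    rw [hE] at hk1 hk2 hk3 hk4
    simp only [Matrix.adjugate_fin_two_of, Matrix.mul_fin_two,
      Matrix.trace_fin_two_of] at hk1 hk2 hk3 hk4
    push_cast at hk1 hk2 hk3 hk4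
    have h4 : (4 : ℚ) * (p : ℚ) ≠ 0 := by simp [hpQ]
    have h2p : (2 : ℚ) * (p : ℚ) ^ 2 ≠ 0 := by simp [hpQ]
    have h00 : x 0 0 = (p : ℚ) * k1 := by
      field_simp at hk1
      apply mul_right_cancel₀ h4
      linear_combination hk1
    have h01 : x 0 1 = -2 * (k2 : ℚ) := by
      field_simp at hk2
      apply mul_right_cancel₀ h2p
      linear_combination -hk2
    have h10 : x 1 0 = 2 * (k3 : ℚ) := by
      field_simp at hk3
      apply mul_right_cancel₀ h2p
      linear_combination hk3
    have hk4' : (k3 : ℚ) + ε * k2 = p * k4 := by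
      rw [h01, h10] at hk4
      field_simp at hk4
      apply mul_right_cancel₀ h4
      linear_combination hk4
    have hk4int : k3 + ε * k2 = (p : ℤ) * k4 := by exact_mod_cast hk4'
    refine ⟨-k3, (p:ℤ) * k1, -k2, ?_, ⟨k1, rfl⟩, ⟨-k4, by linarith⟩⟩
    rw [hE, h00, h01, h10]
    ext i j
    fin_cases i <;> fin_cases j <;> push_cast <;> simp <;> ring
  -- Step 2: divisibility witnesses from the congruence hypotheses.
  obtain ⟨u1, hu1⟩ : ∃ u1 : ℤ, δ - α = (p:ℤ) * u1 := hαδ.dvd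
  obtain ⟨v1, hv1⟩ : ∃ v1 : ℤ, ε * β - γ = (p:ℤ) * v1 := hγβ.dvd
  obtain ⟨w1, hw1⟩ : ∃ w1 : ℤ, a + ε * c = (p:ℤ) * w1 := hpac
  obtain ⟨b1, hb1⟩ : ∃ b1 : ℤ, b = (p:ℤ) * b1 := hpb
  -- Step 3: the inverse of M.
  have hMinv : (!![(α : ℚ), β; γ, δ])⁻¹ = !![(δ : ℚ), -β; -γ, α] := by
    apply Matrix.inv_eq_right_inv
    ext i j
    fin_cases i <;> fin_cases j <;>
      simp [Matrix.mul_fin_two, Matrix.one_fin_two] <;>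
      first
        | linear_combination hdetQ
        | ring
  -- Step 4: explicit conjugated matrix together with all congruence facts.
  obtain ⟨a', b', c', hconj, hd1, hd2, hd3, hd4, hd5, hdb, hda⟩ :
      ∃ a' b' c' : ℤ,
        (!![(α : ℚ), β; γ, δ])⁻¹ * x * !![(α : ℚ), β; γ, δ] =
          !![(b' : ℚ), 2 * (c' : ℚ); -2 * (a' : ℚ), -(b' : ℚ)] ∧
        (p:ℤ) ∣ (a' - a) ∧ (p:ℤ) ∣ (b' - b) ∧ (p:ℤ) ∣ (c' - c) ∧
        (2:ℤ) ∣ (b' - b) ∧ ((p:ℤ)^2) ∣ (ε * (c' - c) - (a' - a)) ∧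
        (p:ℤ) ∣ b' ∧ (p:ℤ) ∣ (a' + ε * c') := by
    refine ⟨α^2*a + γ^2*c + α*γ*b, (α*δ + β*γ)*b + 2*α*β*a + 2*γ*δ*c,
      β^2*a + δ^2*c + β*δ*b, ?_, ?_, ?_, ?_, ?_, ?_, ?_, ?_⟩
    · rw [hMinv, hxE]
      ext i j
      fin_cases i <;> fin_cases j <;>
        simp [Matrix.mul_fin_two] <;> push_cast <;> ring
    · refine ⟨-(a*α)*u1 + γ*β*w1 - γ*c*v1 + α*γ*b1, ?_⟩
      linear_combination (-(a*α))*hu1 + (γ*β)*hw1 + (-(γ*c))*hv1 +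
        (α*γ)*hb1 + a*hdet
    · refine ⟨2*β*ε*c*u1 - 2*δ*c*v1 + 2*β*α*w1 + 2*β*γ*b1, ?_⟩
      linear_combination (2*β*ε*c)*hu1 + (-(2*δ*c))*hv1 + (2*β*α)*hw1 +
        (2*β*γ)*hb1 + b*hdet
    · refine ⟨δ*c*u1 - β*c*v1 + β^2*w1 + β*δ*b1, ?_⟩
      linear_combination (δ*c)*hu1 + (-(β*c))*hv1 + (β^2)*hw1 +
        (β*δ)*hb1 + c*hdet
    · refine ⟨β*γ*b + α*β*a + γ*δ*c, ?_⟩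
      linear_combination b*hdet
    · refine ⟨u1*(α*w1 + ε*c*u1 + ε*β*b1) + v1*(β*w1 - c*v1 + α*b1), ?_⟩
      linear_combination
        ((α*a + ε*δ*c + ε*β*b) + (p:ℤ)*u1*ε*c) * hu1 +
        ((β*a + γ*c + α*b) - (p:ℤ)*v1*c) * hv1 +
        ((p:ℤ)*u1*α + (p:ℤ)*v1*β) * hw1 +
        ((p:ℤ)*u1*ε*β + (p:ℤ)*v1*α) * hb1 +
        (ε*c - a) * hdet
    · obtain ⟨q2, e2⟩ : (p:ℤ) ∣ ((α*δ + β*γ)*b + 2*α*β*a + 2*γ*δ*c - b) := by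
        refine ⟨2*β*ε*c*u1 - 2*δ*c*v1 + 2*β*α*w1 + 2*β*γ*b1, ?_⟩
        linear_combination (2*β*ε*c)*hu1 + (-(2*δ*c))*hv1 + (2*β*α)*hw1 +
          (2*β*γ)*hb1 + b*hdet
      refine ⟨q2 + b1, ?_⟩
      linear_combination e2 + hb1
    · obtain ⟨q1, e1⟩ : (p:ℤ) ∣ (α^2*a + γ^2*c + α*γ*b - a) := by
        refine ⟨-(a*α)*u1 + γ*β*w1 - γ*c*v1 + α*γ*b1, ?_⟩
        linear_combination (-(a*α))*hu1 + (γ*β)*hw1 + (-(γ*c))*hv1 +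
          (α*γ)*hb1 + a*hdet
      obtain ⟨q3, e3⟩ : (p:ℤ) ∣ (β^2*a + δ^2*c + β*δ*b - c) := by
        refine ⟨δ*c*u1 - β*c*v1 + β^2*w1 + β*δ*b1, ?_⟩
        linear_combination (δ*c)*hu1 + (-(β*c))*hv1 + (β^2)*hw1 +
          (β*δ)*hb1 + c*hdet
      refine ⟨q1 + ε*q3 + w1, ?_⟩
      linear_combination e1 + ε*e3 + hw1
  refine ⟨⟨?_, ?_⟩, ?_⟩
  -- trace of the conjugate is zero
  · rw [hconj, Matrix.trace_fin_two_of]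
    ring
  -- dual pairing stays integral
  · rintro y ⟨A, B, C, rfl, hA0, hB0, hC0, hB2, hAC⟩
    have hodd : Odd p := hp.odd_of_ne_two hp2
    have hcop : IsCoprime (2:ℤ) (p:ℤ) := by
      rw [Int.isCoprime_iff_gcd_eq_one]
      simpa [Int.gcd] using hodd.coprime_two_left
    obtain ⟨B1, hB1⟩ : (2*(p:ℤ)) ∣ B :=
      hcop.mul_dvd (Int.modEq_zero_iff_dvd.mp hB2) (Int.modEq_zero_iff_dvd.mp hB0)
    obtain ⟨C1, hC1⟩ : (p:ℤ) ∣ C := Int.modEq_zero_iff_dvd.mp hC0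
    obtain ⟨t, ht⟩ : ((p:ℤ)^2) ∣ (ε * C - A) := hAC.dvd
    obtain ⟨b1', hb1'⟩ := hdb
    obtain ⟨s, hs⟩ := hda
    refine ⟨B1*b1' + t*c' - C1*s, ?_⟩
    have key : B * b' - 2*A*c' - 2*C*a' = 2*(p:ℤ)^2*(B1*b1' + t*c' - C1*s) := by
      linear_combination b'*hB1 + (2*(p:ℤ)*B1)*hb1' + (2*c')*ht +
        (-2*C)*hs + (-2*(p:ℤ)*s)*hC1
    have keyQ : (B:ℚ) * b' - 2*A*c' - 2*C*a' = 2*(p:ℚ)^2*((B1*b1' + t*c' - C1*s : ℤ) : ℚ) := by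
      exact_mod_cast key
    rw [hconj]
    simp only [Matrix.adjugate_fin_two_of, Matrix.mul_fin_two, Matrix.trace_fin_two_of]
    rw [div_eq_iff (by positivity : (4 : ℚ) * (p:ℚ)^2 ≠ 0)]
    push_cast at keyQ ⊢
    linear_combination 2 * keyQ
  -- the difference lies in Lns
  · refine ⟨a' - a, b' - b, c' - c, ?_,
      Int.modEq_zero_iff_dvd.mpr hd1, Int.modEq_zero_iff_dvd.mpr hd2,
      Int.modEq_zero_iff_dvd.mpr hd3, Int.modEq_zero_iff_dvd.mpr hd4,
      Int.modEq_iff_dvd.mpr hd5⟩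
    rw [hconj, hxE]
    ext i j
    fin_cases i <;> fin_cases j <;> push_cast <;> simp <;> ring
end

section
/- Let M = (α, β; γ, δ) ∈ SL₂(ℤ) satisfy α ≡ −δ (mod p) and γ ≡ −εβ (mod p). Then conjugation by M preserves both lattices: for every x ∈ L_ns one has M⁻¹·x·M ∈ L_ns, and for every x ∈ L_ns^∨ one has M⁻¹·x·M ∈ L_ns^∨. -/
/-- Key computation: conjugating a lattice element by an integral matrix whose
entries satisfy the `Γ⁺_ns \ Γ_ns` congruences yields another lattice element. -/
private lemma stmt15_conj (p : ℕ) (ε A B C α β γ δ : ℤ)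
    (hαδ : α ≡ -δ [ZMOD (p:ℤ)]) (hγβ : γ ≡ -(ε * β) [ZMOD (p:ℤ)])
    (hA : A ≡ 0 [ZMOD (p:ℤ)]) (hB : B ≡ 0 [ZMOD (p:ℤ)])
    (hC : C ≡ 0 [ZMOD (p:ℤ)]) (hB2 : B ≡ 0 [ZMOD 2])
    (hAC : A ≡ ε * C [ZMOD ((p:ℤ)^2)]) :
    ∃ A' B' C' : ℤ,
      !![(δ:ℚ), -(β:ℚ); -(γ:ℚ), (α:ℚ)] *
        !![(B : ℚ), 2 * (C : ℚ); -2 * (A : ℚ), -(B : ℚ)] *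
        !![(α : ℚ), (β : ℚ); (γ : ℚ), (δ : ℚ)]
        = !![(B' : ℚ), 2 * (C' : ℚ); -2 * (A' : ℚ), -(B' : ℚ)] ∧
      A' ≡ 0 [ZMOD (p:ℤ)] ∧ B' ≡ 0 [ZMOD (p:ℤ)] ∧ C' ≡ 0 [ZMOD (p:ℤ)] ∧
      B' ≡ 0 [ZMOD 2] ∧ A' ≡ ε * C' [ZMOD ((p:ℤ)^2)] := by
  obtain ⟨b, rfl⟩ := Int.modEq_zero_iff_dvd.mp hB
  obtain ⟨c, rfl⟩ := Int.modEq_zero_iff_dvd.mp hC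
  obtain ⟨s, hs⟩ := Int.ModEq.dvd hAC
  have hA' : A = ε * ((p:ℤ) * c) - (p:ℤ)^2 * s := by linarith
  subst hA'
  obtain ⟨u, hu⟩ := Int.ModEq.dvd hαδ
  have hα' : α = -δ - (p:ℤ) * u := by linarith
  subst hα'
  obtain ⟨v, hv⟩ := Int.ModEq.dvd hγβ
  have hγ' : γ = -(ε * β) - (p:ℤ) * v := by linarith
  obtain ⟨b2, hb2⟩ := Int.modEq_zero_iff_dvd.mp hB2
  subst hγ'
  refine ⟨(ε * ((p:ℤ) * c) - (p:ℤ)^2 * s) * (-δ - (p:ℤ) * u)^2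
        + (p:ℤ) * b * (-δ - (p:ℤ) * u) * (-(ε * β) - (p:ℤ) * v)
        + (p:ℤ) * c * (-(ε * β) - (p:ℤ) * v)^2,
      2 * (ε * ((p:ℤ) * c) - (p:ℤ)^2 * s) * (-δ - (p:ℤ) * u) * β
        + (p:ℤ) * b * ((-δ - (p:ℤ) * u) * δ + β * (-(ε * β) - (p:ℤ) * v))
        + 2 * ((p:ℤ) * c) * (-(ε * β) - (p:ℤ) * v) * δ,
      (ε * ((p:ℤ) * c) - (p:ℤ)^2 * s) * β^2
        + (p:ℤ) * b * β * δ
        + (p:ℤ) * c * δ^2, ?_, ?_, ?_, ?_, ?_, ?_⟩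
  · ext i j
    fin_cases i <;> fin_cases j <;>
      · simp [Matrix.mul_apply, Fin.sum_univ_two]
        push_cast
        ring
  · exact Int.modEq_zero_iff_dvd.mpr
      ⟨(ε * c - (p:ℤ) * s) * (-δ - (p:ℤ) * u)^2
        + b * (-δ - (p:ℤ) * u) * (-(ε * β) - (p:ℤ) * v)
        + c * (-(ε * β) - (p:ℤ) * v)^2, by ring⟩
  · exact Int.modEq_zero_iff_dvd.mpr
      ⟨2 * (ε * c - (p:ℤ) * s) * (-δ - (p:ℤ) * u) * β
        + b * ((-δ - (p:ℤ) * u) * δ + β * (-(ε * β) - (p:ℤ) * v))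
        + 2 * c * (-(ε * β) - (p:ℤ) * v) * δ, by ring⟩
  · exact Int.modEq_zero_iff_dvd.mpr
      ⟨(ε * c - (p:ℤ) * s) * β^2 + b * β * δ + c * δ^2, by ring⟩
  · exact Int.modEq_zero_iff_dvd.mpr
      ⟨(ε * ((p:ℤ) * c) - (p:ℤ)^2 * s) * (-δ - (p:ℤ) * u) * β
        + b2 * ((-δ - (p:ℤ) * u) * δ + β * (-(ε * β) - (p:ℤ) * v))
        + (p:ℤ) * c * (-(ε * β) - (p:ℤ) * v) * δ,
        by linear_combination ((-δ - (p:ℤ) * u) * δ + β * (-(ε * β) - (p:ℤ) * v)) * hb2⟩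
  · refine Int.modEq_iff_dvd.mpr
      ⟨s * ((-δ - (p:ℤ) * u)^2 - ε * β^2)
        + b * ((-δ - (p:ℤ) * u) * v - ε * β * u)
        + c * ((-(ε * β) - (p:ℤ) * v) * v - ε * β * v
            + ε * (-δ - (p:ℤ) * u) * u - ε * δ * u), by ring⟩

/-- Proposition 8.1 (2), second part. If `M = (α, β; γ, δ) ∈ SL₂(ℤ)`
satisfies `α ≡ −δ` and `γ ≡ −εβ (mod p)` (i.e. `M ∈ Γ⁺_ns \ Γ_ns`), then
conjugation by `M` preserves both `L_ns` and `L_ns^∨`. -/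
theorem stmt_15 (p : ℕ) (hp : p.Prime) (hp2 : p ≠ 2)
    (ε : ℤ) (hε1 : ε ≡ 1 [ZMOD 4]) (hεns : ¬ IsSquare (ε : ZMod p))
    (bform : Matrix (Fin 2) (Fin 2) ℚ → Matrix (Fin 2) (Fin 2) ℚ → ℚ)
    (hbform : bform = fun x y => -((x * y.adjugate).trace) / (4 * (p : ℚ) ^ 2))
    (Lns : Set (Matrix (Fin 2) (Fin 2) ℚ))
    (hLns : Lns = {x | ∃ A B C : ℤ,
      x = !![(B : ℚ), 2 * (C : ℚ); -2 * (A : ℚ), -(B : ℚ)] ∧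
      A ≡ 0 [ZMOD (p : ℤ)] ∧ B ≡ 0 [ZMOD (p : ℤ)] ∧ C ≡ 0 [ZMOD (p : ℤ)] ∧
      B ≡ 0 [ZMOD 2] ∧ A ≡ ε * C [ZMOD ((p : ℤ) ^ 2)]})
    (LnsDual : Set (Matrix (Fin 2) (Fin 2) ℚ))
    (hLnsDual : LnsDual =
      {x | x.trace = 0 ∧ ∀ y ∈ Lns, ∃ k : ℤ, bform x y = k})
    (α β γ δ : ℤ) (hdet : α * δ - β * γ = 1)
    (hαδ : α ≡ -δ [ZMOD (p : ℤ)]) (hγβ : γ ≡ -(ε * β) [ZMOD (p : ℤ)])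
    (M : Matrix (Fin 2) (Fin 2) ℚ)
    (hM : M = !![(α : ℚ), (β : ℚ); (γ : ℚ), (δ : ℚ)]) :
    (∀ x ∈ Lns, M⁻¹ * x * M ∈ Lns) ∧ (∀ x ∈ LnsDual, M⁻¹ * x * M ∈ LnsDual) := by
  have hdetQ : (α:ℚ) * δ - β * γ = 1 := by exact_mod_cast hdet
  set N : Matrix (Fin 2) (Fin 2) ℚ := !![(δ:ℚ), -(β:ℚ); -(γ:ℚ), (α:ℚ)] with hN
  have hMN : M * N = 1 := by
    rw [hM, hN]
    ext i j
    fin_cases i <;> fin_cases j <;>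
      · simp [Matrix.mul_apply, Fin.sum_univ_two, Matrix.one_apply]
        first
          | linear_combination hdetQ
          | ring
  have hinv : M⁻¹ = N := Matrix.inv_eq_right_inv hMN
  constructor
  · -- part 1 : conjugation preserves Lns
    intro x hx
    rw [hLns] at hx ⊢
    obtain ⟨A, B, C, rfl, hA, hB, hC, hB2, hAC⟩ := hx
    obtain ⟨A', B', C', hmat, h1, h2, h3, h4, h5⟩ :=
      stmt15_conj p ε A B C α β γ δ hαδ hγβ hA hB hC hB2 hAC
    refine ⟨A', B', C', ?_, h1, h2, h3, h4, h5⟩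
    rw [hinv, hM]
    exact hmat
  · -- part 2 : conjugation preserves the dual lattice
    intro x hx
    rw [hLnsDual] at hx ⊢
    obtain ⟨hxtr, hxint⟩ := hx
    constructor
    · calc (M⁻¹ * x * M).trace = (M * M⁻¹ * x).trace := by
            rw [Matrix.trace_mul_cycle]
        _ = 0 := by rw [hinv, hMN, one_mul, hxtr]
    · intro y hy
      rw [hLns] at hy
      obtain ⟨A, B, C, hy0, hA, hB, hC, hB2, hAC⟩ := hy
      -- conjugation by the inverse matrix maps y into Lns
      have hδα : δ ≡ -α [ZMOD (p:ℤ)] := by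
        refine Int.modEq_iff_dvd.mpr ?_
        have h := Int.modEq_iff_dvd.mp hαδ
        have : (-α - δ : ℤ) = -δ - α := by ring
        rw [this]; exact h
      have hγβ' : -γ ≡ -(ε * -β) [ZMOD (p:ℤ)] := by
        refine Int.modEq_iff_dvd.mpr ?_
        have h := Int.modEq_iff_dvd.mp hγβ
        obtain ⟨w, hw⟩ := h
        exact ⟨-w, by linarith⟩
      obtain ⟨A', B', C', hmat, h1, h2, h3, h4, h5⟩ :=
        stmt15_conj p ε A B C δ (-β) (-γ) α hδα hγβ' hA hB hC hB2 hAC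
      have hcast1 : !![((α:ℤ):ℚ), -(((-β:ℤ)):ℚ); -(((-γ:ℤ)):ℚ), ((δ:ℤ):ℚ)] = M := by
        rw [hM]; norm_num
      have hcast2 : !![(((δ:ℤ)):ℚ), (((-β:ℤ)):ℚ); (((-γ:ℤ)):ℚ), ((α:ℤ):ℚ)] = N := by
        rw [hN]; push_cast; ring_nf
      rw [hcast1, hcast2, ← hy0] at hmat
      -- hmat : M * y * N = !![B', 2C'; -2A', -B']
      have hKmem : M * y * N ∈ Lns := by
        rw [hLns]
        exact ⟨A', B', C', hmat, h1, h2, h3, h4, h5⟩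
      obtain ⟨k, hk⟩ := hxint (M * y * N) hKmem
      refine ⟨k, ?_⟩
      rw [← hk, hbform]
      simp only
      -- reduce to an equality of traces
      have hadjy : y.adjugate = -y := by
        rw [hy0, Matrix.adjugate_fin_two_of]
        ext i j
        fin_cases i <;> fin_cases j <;> simp
      have hadjK : (M * y * N).adjugate = -(M * y * N) := by
        rw [hmat, Matrix.adjugate_fin_two_of]
        ext i j
        fin_cases i <;> fin_cases j <;> simp
      rw [hadjy, hadjK, Matrix.mul_neg, Matrix.mul_neg, Matrix.trace_neg,
        Matrix.trace_neg]
      have key : (M⁻¹ * x * M * y).trace = (x * (M * y * N)).trace := by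
        rw [hinv]
        have e1 : N * x * M * y = N * (x * (M * y)) := by
          rw [Matrix.mul_assoc, Matrix.mul_assoc]
        rw [e1, Matrix.trace_mul_comm, Matrix.mul_assoc]
      rw [key]
end

section
/- The map from L_ns^∨ to ℤ/2ℤ × ℤ/p²ℤ sending the matrix (B, 2C; −2A, −B) (with A, B, C ∈ ℤ, B ≡ 0 (mod p), A ≡ −Cε (mod p)) to (B mod 2, (A − Cε) mod p²) is a surjective group homomorphism whose kernel is exactly L_ns. In particular the quotient group L_ns^∨/L_ns is isomorphic to ℤ/2p²ℤ and has order 2p². -/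
/-- Proposition 8.1 (3) of the paper. Identifying the matrix
`(B, 2C; −2A, −B)` with the triple `(A, B, C) ∈ ℤ³`, the map
`(A,B,C) ↦ (B mod 2, (A − Cε) mod p²)` is an additive homomorphism which,
restricted to the triples parametrizing `L_ns^∨` (those with `B ≡ 0 (mod p)` and
`A ≡ −Cε (mod p)`), is surjective onto `ℤ/2 × ℤ/p²` and has kernel exactly the
triples parametrizing `L_ns`. In particular `L_ns^∨/L_ns ≃ ℤ/2p²ℤ`, a group of
order `2p²`. -/
theorem stmt_16 (p : ℕ) (hp : p.Prime) (hp2 : p ≠ 2)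
    (ε : ℤ) (hε1 : ε ≡ 1 [ZMOD 4]) (hεns : ¬ IsSquare (ε : ZMod p))
    (f : ℤ × ℤ × ℤ → ZMod 2 × ZMod (p ^ 2))
    (hf : f = fun v => (((v.2.1 : ℤ) : ZMod 2), ((v.1 - v.2.2 * ε : ℤ) : ZMod (p ^ 2))))
    (dual : Set (ℤ × ℤ × ℤ))
    (hdual : dual = {v | v.2.1 ≡ 0 [ZMOD (p : ℤ)] ∧ v.1 ≡ -(v.2.2 * ε) [ZMOD (p : ℤ)]})
    (lat : Set (ℤ × ℤ × ℤ))
    (hlat : lat = {v | v.1 ≡ 0 [ZMOD (p : ℤ)] ∧ v.2.1 ≡ 0 [ZMOD (p : ℤ)] ∧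
      v.2.2 ≡ 0 [ZMOD (p : ℤ)] ∧ v.2.1 ≡ 0 [ZMOD 2] ∧
      v.1 ≡ ε * v.2.2 [ZMOD ((p : ℤ) ^ 2)]}) :
    (∀ v w : ℤ × ℤ × ℤ, f (v + w) = f v + f w) ∧
    (∀ u : ZMod 2 × ZMod (p ^ 2), ∃ v ∈ dual, f v = u) ∧
    (∀ v ∈ dual, (f v = 0 ↔ v ∈ lat)) ∧
    Nonempty ((ZMod 2 × ZMod (p ^ 2)) ≃+ ZMod (2 * p ^ 2)) ∧
    Nat.card (ZMod 2 × ZMod (p ^ 2)) = 2 * p ^ 2 := by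
  haveI : Fact p.Prime := ⟨hp⟩
  haveI : NeZero (p ^ 2) := ⟨pow_ne_zero 2 hp.ne_zero⟩
  have hpodd : Odd p := hp.odd_of_ne_two hp2
  have hpZ : Prime (p : ℤ) := Nat.prime_iff_prime_int.mp hp
  have hε0 : (ε : ZMod p) ≠ 0 := fun h => hεns (h ▸ ⟨0, by simp⟩)
  have hnp2' : ¬ p ∣ 2 := fun h =>
    hp2 ((Nat.prime_dvd_prime_iff_eq hp Nat.prime_two).mp h)
  have h20 : (2 : ZMod p) ≠ 0 := by
    intro h
    have : (p : ℤ) ∣ 2 :=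
      (ZMod.intCast_zmod_eq_zero_iff_dvd 2 p).mp (by exact_mod_cast h)
    exact hnp2' (by exact_mod_cast this)
  have hnp2 : ¬ (p : ℤ) ∣ 2 := fun h => hnp2' (by exact_mod_cast h)
  have hnpε : ¬ (p : ℤ) ∣ ε := fun h => hε0 ((ZMod.intCast_zmod_eq_zero_iff_dvd ε p).mpr h)
  refine ⟨?_, ?_, ?_, ?_, ?_⟩
  · intro v w
    simp only [hf, Prod.fst_add, Prod.snd_add, Prod.mk_add_mk, Prod.mk.injEq]
    constructor <;> push_cast <;> ring
  · intro u
    set b : ℤ := (u.2.val : ℤ) with hb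
    set t : ZMod p := -(b : ZMod p) * (2 * (ε : ZMod p))⁻¹ with ht
    set C : ℤ := (t.val : ℤ) with hC
    refine ⟨(b + C * ε, (u.1.val : ℤ) * p, C), ?_, ?_⟩
    · rw [hdual]
      constructor
      · exact Int.modEq_zero_iff_dvd.mpr ⟨(u.1.val : ℤ), mul_comm _ _⟩
      · show b + C * ε ≡ -(C * ε) [ZMOD (p : ℤ)]
        have : ((b + C * ε - -(C * ε) : ℤ) : ZMod p) = 0 := by
          push_cast
          have hCt : ((C : ℤ) : ZMod p) = t := by
            rw [hC]; push_cast; simp [ZMod.natCast_val, ZMod.cast_id]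
          rw [hCt, ht]
          have h2ε : (2 * (ε : ZMod p)) ≠ 0 := mul_ne_zero h20 hε0
          field_simp
          ring
        have hdd := (ZMod.intCast_zmod_eq_zero_iff_dvd _ p).mp this
        refine Int.modEq_iff_dvd.mpr ?_
        rw [show -(C * ε) - (b + C * ε) = -(b + C * ε - -(C * ε)) by ring]
        exact dvd_neg.mpr hdd
    · rw [hf]
      have hp1 : ((p : ℕ) : ZMod 2) = 1 := by
        rw [← ZMod.natCast_mod p 2, Nat.odd_iff.mp hpodd, Nat.cast_one]
      have h1 : (((u.1.val : ℤ) * p : ℤ) : ZMod 2) = u.1 := by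
        push_cast
        rw [hp1, mul_one]
        simp [ZMod.natCast_val, ZMod.cast_id]
      have h2 : ((b + C * ε - C * ε : ℤ) : ZMod (p ^ 2)) = u.2 := by
        rw [show b + C * ε - C * ε = b by ring, hb]
        push_cast
        simp [ZMod.natCast_val, ZMod.cast_id]
      exact Prod.ext h1 h2
  · intro v hv
    obtain ⟨A, B, C⟩ := v
    rw [hdual] at hv
    obtain ⟨hB, hA⟩ := hv
    rw [hf, hlat]
    simp only [Set.mem_setOf_eq, Prod.mk_eq_zero]
    constructor
    · rintro ⟨h2, hpp⟩
      have h2' : (2 : ℤ) ∣ B := by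
        have := (ZMod.intCast_zmod_eq_zero_iff_dvd B 2).mp h2
        exact_mod_cast this
      have hpp' : ((p : ℤ) ^ 2) ∣ A - C * ε := by
        have := (ZMod.intCast_zmod_eq_zero_iff_dvd (A - C * ε) (p ^ 2)).mp hpp
        exact_mod_cast this
      have hAp2 : A ≡ ε * C [ZMOD ((p : ℤ) ^ 2)] := by
        rw [Int.modEq_iff_dvd]
        rw [show ε * C - A = -(A - C * ε) by ring]
        exact dvd_neg.mpr hpp'
      have hAp : A ≡ ε * C [ZMOD (p : ℤ)] :=
        hAp2.of_dvd (dvd_pow_self _ (by norm_num))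
      -- from A ≡ εC and A ≡ -Cε mod p: p ∣ 2εC
      have hd : (p : ℤ) ∣ 2 * ε * C := by
        have h1 : (p : ℤ) ∣ ε * C - -(C * ε) := (hA.symm.trans hAp).dvd
        rwa [show ε * C - -(C * ε) = 2 * ε * C by ring] at h1
      have hCp : (p : ℤ) ∣ C := by
        rcases hpZ.dvd_mul.mp hd with h | h
        · rcases hpZ.dvd_mul.mp h with h | h
          · exact absurd h hnp2
          · exact absurd h hnpε
        · exact h
      have hAp0 : A ≡ 0 [ZMOD (p : ℤ)] := by
        refine hAp.trans ?_
        exact Int.modEq_zero_iff_dvd.mpr (Dvd.dvd.mul_left hCp ε)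
      exact ⟨hAp0, hB, Int.modEq_zero_iff_dvd.mpr hCp,
        Int.modEq_zero_iff_dvd.mpr h2', hAp2⟩
    · rintro ⟨_, _, _, hB2, hAεC⟩
      constructor
      · exact (ZMod.intCast_zmod_eq_zero_iff_dvd B 2).mpr
          (by exact_mod_cast Int.modEq_zero_iff_dvd.mp hB2)
      · refine (ZMod.intCast_zmod_eq_zero_iff_dvd _ (p ^ 2)).mpr ?_
        have := hAεC.dvd
        rw [show ε * C - A = -(A - C * ε) by ring] at this
        have := dvd_neg.mp this
        exact_mod_cast this
  · have hcop : Nat.Coprime 2 (p ^ 2) :=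
      ((Nat.coprime_primes Nat.prime_two hp).mpr (Ne.symm hp2)).pow_right 2
    exact ⟨((ZMod.chineseRemainder hcop).symm : _ ≃+* _).toAddEquiv⟩
  · simp [Nat.card_prod, Nat.card_zmod]
end
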